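/- arXiv:1204.0224 — 12 statements merged into one kernel-verified Lean document; each statement's English description precedes it below -/
import Mathlib

section
/- Let X be a compact metric space and let φ : X → X be a continuous, surjective and open map. Then the following are equivalent: (i) φ is strongly transitive; (ii) for every x ∈ X the set ⋃_{n,m ∈ ℕ} φ^{-m}(φ^n(x)) is dense in X; (iii) for every x ∈ X the set ⋃_{n ∈ ℕ} φ^{-n}(x) is dense in X. -/
/-- A continuous map `ψ : X → X` is strongly transitive if for every nonempty open
subset `V ⊆ X` there is `N ∈ ℕ` such that `⋃_{i=0}^N ψ^i(V) = X`. -/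
def StronglyTransitive {X : Type*} [TopologicalSpace X] (ψ : X → X) : Prop :=
  ∀ V : Set X, IsOpen V → V.Nonempty →
    ∃ N : ℕ, (⋃ i ∈ Finset.range (N + 1), ψ^[i] '' V) = Set.univ

theorem stmt0 {X : Type*} [MetricSpace X] [CompactSpace X] (φ : X → X)
    (hc : Continuous φ) (hs : Function.Surjective φ) (ho : IsOpenMap φ) :
    List.TFAE
      [StronglyTransitive φ,
       ∀ x : X, Dense (⋃ n : ℕ, ⋃ m : ℕ, φ^[m] ⁻¹' {φ^[n] x}),
       ∀ x : X, Dense (⋃ n : ℕ, φ^[n] ⁻¹' {x})] := by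
  tfae_have 1 → 3 := by
    intro h x
    rw [dense_iff_inter_open]
    intro U hU hUne
    obtain ⟨N, hN⟩ := h U hU hUne
    have hx : x ∈ (⋃ i ∈ Finset.range (N + 1), φ^[i] '' U) := hN ▸ Set.mem_univ x
    simp only [Set.mem_iUnion] at hx
    obtain ⟨i, _, v, hvU, hvx⟩ := hx
    exact ⟨v, hvU, Set.mem_iUnion.2 ⟨i, by simp [hvx]⟩⟩
  tfae_have 3 → 2 := by
    intro h x
    refine Dense.mono ?_ (h x)
    intro y hy
    simp only [Set.mem_iUnion, Set.mem_preimage, Set.mem_singleton_iff] at hy ⊢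
    obtain ⟨n, hn⟩ := hy
    exact ⟨0, n, by simpa using hn⟩
  tfae_have 2 → 1 := by
    intro h V hV hVne
    have hoi : ∀ n : ℕ, IsOpenMap (φ^[n]) := by
      intro n
      induction n with
      | zero => exact IsOpenMap.id
      | succ k ih => rw [Function.iterate_succ]; exact ih.comp ho
    set W : Set X := ⋃ m : ℕ, φ^[m] '' V with hWdef
    have hWopen : IsOpen W := isOpen_iUnion fun m => (hoi m) V hV
    by_cases hW : W = Set.univ
    · -- finite subcover
      obtain ⟨t, ht⟩ := isCompact_univ.elim_finite_subcover (fun m : ℕ => φ^[m] '' V)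
        (fun m => (hoi m) V hV) (by rw [← hW])
      refine ⟨t.sup id, Set.eq_univ_of_univ_subset ?_⟩
      intro y hy
      have := ht (Set.mem_univ y)
      simp only [Set.mem_iUnion] at this ⊢
      obtain ⟨m, hmt, hym⟩ := this
      exact ⟨m, Finset.mem_range.2 (Nat.lt_succ_of_le (Finset.le_sup (f := id) hmt)), hym⟩
    · exfalso
      set C : Set X := Wᶜ with hCdef
      have hCclosed : IsClosed C := hWopen.isClosed_compl
      have hCne : C.Nonempty := Set.nonempty_compl.2 hW
      have hCinv : φ ⁻¹' C ⊆ C := by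
        intro y hy
        by_contra hyW
        have hyW' : y ∈ W := by simpa [hCdef] using hyW
        simp only [hWdef, Set.mem_iUnion] at hyW'
        obtain ⟨m, v, hvV, hvy⟩ := hyW'
        apply hy
        have : φ y ∈ W := Set.mem_iUnion.2 ⟨m + 1, v, hvV, by
          rw [Function.iterate_succ_apply', hvy]⟩
        simpa [hCdef] using this
      -- nested closed nonempty sets
      set K : ℕ → Set X := fun n => φ^[n] ⁻¹' C with hKdef
      have hKclosed : ∀ n, IsClosed (K n) := fun n => hCclosed.preimage (hc.iterate n)
      have hKne : ∀ n, (K n).Nonempty := fun n => hCne.preimage (hs.iterate n)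
      have hKsub : ∀ n, K (n + 1) ⊆ K n := by
        intro n
        have : K (n + 1) = φ^[n] ⁻¹' (φ ⁻¹' C) := by
          ext y
          simp only [hKdef, Set.mem_preimage]
          rw [Function.iterate_succ_apply']
        rw [this]
        exact Set.preimage_mono hCinv
      obtain ⟨x, hx⟩ := IsCompact.nonempty_iInter_of_sequence_nonempty_isCompact_isClosed
        K hKsub hKne ((hKclosed 0).isCompact) hKclosed
      have hxn : ∀ n, φ^[n] x ∈ C := fun n => Set.mem_iInter.1 hx n
      obtain ⟨v, hvV, hvD⟩ := (h x).inter_open_nonempty V hV hVne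
      simp only [Set.mem_iUnion, Set.mem_preimage, Set.mem_singleton_iff] at hvD
      obtain ⟨n, m, hnm⟩ := hvD
      exact hxn n (Set.mem_iUnion.2 ⟨m, v, hvV, hnm⟩)
  tfae_finish
end

section
/- Let H be a compact metrizable topological group and α₀ : H → H a continuous surjective group homomorphism with finite kernel. Then α₀ is exact if and only if α₀ is strongly transitive. -/
/-- A continuous map `ψ : X → X` is exact if for every nonempty open subset
`V ⊆ X` there is `N ∈ ℕ` such that `ψ^N(V) = X`. -/
def ExactMap {X : Type*} [TopologicalSpace X] (ψ : X → X) : Prop :=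
  ∀ V : Set X, IsOpen V → V.Nonempty → ∃ N : ℕ, ψ^[N] '' V = Set.univ

theorem stmt1 {H : Type*} [Group H] [TopologicalSpace H] [IsTopologicalGroup H]
    [CompactSpace H] [TopologicalSpace.MetrizableSpace H]
    (α₀ : H →* H) (hc : Continuous α₀) (hs : Function.Surjective α₀)
    (hker : (α₀.ker : Set H).Finite) :
    ExactMap (α₀ : H → H) ↔ StronglyTransitive (α₀ : H → H) := by
  set ψ : H → H := (α₀ : H → H) with hψ
  constructor
  · -- exact → strongly transitive
    intro hE V hV hVne
    obtain ⟨N, hN⟩ := hE V hV hVne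
    refine ⟨N, Set.eq_univ_of_univ_subset ?_⟩
    rw [← hN]
    intro x hx
    exact Set.mem_biUnion (Finset.self_mem_range_succ N) hx
  · -- strongly transitive → exact
    intro hST V hV hVne
    -- the candidate covering sets C n = V * ker(α₀^n)
    set C : ℕ → Set H := fun n => {h : H | ∃ v ∈ V, ∃ k : H, ψ^[n] k = 1 ∧ v * k = h}
      with hC
    have hCopen : ∀ n, IsOpen (C n) := by
      intro n
      have : C n = ⋃ k : {k : H // ψ^[n] k = 1}, (fun g : H => g * (k : H)⁻¹) ⁻¹' V := by
        ext h
        simp only [Set.mem_iUnion, Set.mem_preimage, hC, Set.mem_setOf_eq]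
        constructor
        · rintro ⟨v, hv, k, hk, rfl⟩
          exact ⟨⟨k, hk⟩, by simpa using hv⟩
        · rintro ⟨⟨k, hk⟩, hmem⟩
          exact ⟨h * k⁻¹, hmem, k, hk, by group⟩
      rw [this]
      exact isOpen_iUnion fun k => hV.preimage (by continuity)
    have hCmono : Monotone C := by
      refine monotone_nat_of_le_succ fun n h hh => ?_
      obtain ⟨v, hv, k, hk, rfl⟩ := hh
      refine ⟨v, hv, k, ?_, rfl⟩
      rw [Function.iterate_succ_apply', hk]
      exact map_one α₀
    have hCcover : ∀ h : H, ∃ n, h ∈ C n := by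
      intro h
      -- the open set (fun v => v⁻¹ * h) '' V, written as a preimage
      have hUopen : IsOpen ((fun g : H => h * g⁻¹) ⁻¹' V) := hV.preimage (by continuity)
      have hUne : ((fun g : H => h * g⁻¹) ⁻¹' V).Nonempty := by
        obtain ⟨v, hv⟩ := hVne
        exact ⟨v⁻¹ * h, by simpa [mul_assoc] using hv⟩
      obtain ⟨N, hN⟩ := hST _ hUopen hUne
      have h1 : (1 : H) ∈ ⋃ i ∈ Finset.range (N + 1), ψ^[i] '' ((fun g : H => h * g⁻¹) ⁻¹' V) := by
        rw [hN]; trivial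
      simp only [Set.mem_iUnion, Set.mem_image, Set.mem_preimage] at h1
      obtain ⟨i, _, u, hu, hiu⟩ := h1
      exact ⟨i, h * u⁻¹, hu, u, hiu, by group⟩
    -- compactness: some C n is everything
    obtain ⟨t, ht⟩ := IsCompact.elim_finite_subcover isCompact_univ C hCopen
      (fun h _ => Set.mem_iUnion.2 (hCcover h))
    have hn : ∃ n, C n = Set.univ := by
      rcases t.eq_empty_or_nonempty with rfl | htne
      · obtain ⟨n, hn⟩ := hCcover 1
        have := ht (Set.mem_univ 1)
        simp at this
      · refine ⟨t.max' htne, Set.eq_univ_of_univ_subset fun h hh => ?_⟩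
        obtain ⟨i, hi, hmem⟩ := Set.mem_iUnion₂.1 (ht hh)
        exact hCmono (t.le_max' i hi) hmem
    obtain ⟨n, hn⟩ := hn
    refine ⟨n, Set.eq_univ_of_univ_subset fun y _ => ?_⟩
    obtain ⟨x, hx⟩ := (hs.iterate n) y
    have hxC : x ∈ C n := hn ▸ Set.mem_univ x
    obtain ⟨v, hv, k, hk, rfl⟩ := hxC
    refine ⟨v, hv, ?_⟩
    have : ψ^[n] (v * k) = ψ^[n] v * ψ^[n] k := iterate_map_mul α₀ n v k
    rw [← hx, this, hk, mul_one]
end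

section
/- Let H be a compact metrizable abelian topological group and α₀ : H → H a continuous group homomorphism. Then α₀ is a local homeomorphism if and only if the kernel of α₀ is finite and the quotient group H / α₀(H) is finite. -/
open Pointwise


theorem stmt2 {H : Type*} [CommGroup H] [TopologicalSpace H] [IsTopologicalGroup H]
    [CompactSpace H] [TopologicalSpace.MetrizableSpace H]
    (α₀ : H →* H) (hc : Continuous α₀) :
    IsLocalHomeomorph (α₀ : H → H) ↔ (Finite α₀.ker ∧ Finite (H ⧸ α₀.range)) := by
  constructor
  · intro h
    constructor
    · -- kernel finite
      obtain ⟨e, he1, heq⟩ := h 1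
      have hker_closed : IsClosed (α₀.ker : Set H) := by
        have : (α₀.ker : Set H) = (α₀ : H → H) ⁻¹' {1} := by
          ext x; simp [MonoidHom.mem_ker]
        rw [this]
        exact isClosed_singleton.preimage hc
      have hopen1 : IsOpen ({1} : Set α₀.ker) := by
        have : ({1} : Set α₀.ker) = (Subtype.val : α₀.ker → H) ⁻¹' e.source := by
          ext ⟨k, hk⟩
          simp only [Set.mem_singleton_iff, Set.mem_preimage]
          constructor
          · intro hk1
            have : k = (1 : H) := congrArg Subtype.val hk1
            rw [this]; exact he1
          · intro hks
            have h1 : α₀ k = α₀ 1 := by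
              rw [map_one]; exact hk
            have : e k = e 1 := by rw [← heq]; exact_mod_cast h1
            have := e.injOn hks he1 this
            exact Subtype.ext this
        rw [this]
        exact e.open_source.preimage continuous_subtype_val
      haveI : DiscreteTopology α₀.ker :=
        discreteTopology_iff_isOpen_singleton_one.mpr hopen1
      haveI : CompactSpace α₀.ker :=
        isCompact_iff_compactSpace.mp hker_closed.isCompact
      exact finite_of_compact_of_discrete
    · -- quotient finite
      have hro : IsOpen (α₀.range : Set H) := by
        have := h.isOpenMap.isOpen_range
        simpa [MonoidHom.coe_range] using this
      exact Subgroup.quotient_finite_of_isOpen _ hro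
  · rintro ⟨hker, hquot⟩
    haveI : α₀.range.FiniteIndex := Subgroup.finiteIndex_of_finite_quotient
    have hrc : IsClosed (α₀.range : Set H) := by
      have : IsCompact (Set.range (α₀ : H → H)) := isCompact_range hc
      simpa [MonoidHom.coe_range] using this.isClosed
    have hro : IsOpen (α₀.range : Set H) :=
      Subgroup.isOpen_of_isClosed_of_finiteIndex _ hrc
    -- α₀ is an open map
    have hopen : IsOpenMap (α₀ : H → H) := by
      set f : H → α₀.range := ⇑α₀.rangeRestrict with hf
      have hfc : Continuous f := hc.subtype_mk _
      have hfs : Function.Surjective f := α₀.rangeRestrict_surjective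
      have hq : Topology.IsQuotientMap f := (hfc.isClosedMap).isQuotientMap hfc hfs
      intro U hU
      have himg : (α₀ : H → H) '' U = Subtype.val '' (f '' U) := by
        rw [Set.image_image]; rfl
      rw [himg]
      apply hro.isOpenMap_subtype_val
      rw [← hq.isOpen_preimage]
      have hpre : f ⁻¹' (f '' U) = U * (α₀.ker : Set H) := by
        ext x
        constructor
        · rintro ⟨u, hu, huv⟩
          have hval : α₀ u = α₀ x := congrArg Subtype.val huv
          refine ⟨u, hu, u⁻¹ * x, ?_, by group⟩
          simp [MonoidHom.mem_ker, map_mul, hval]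
        · rintro ⟨u, hu, k, hk, rfl⟩
          refine ⟨u, hu, ?_⟩
          apply Subtype.ext
          show α₀ u = α₀ (u * k)
          have hk1 : α₀ k = 1 := hk
          simp [map_mul, hk1]
      rw [hpre]
      exact hU.mul_right
    -- local injectivity
    have hkfin : (α₀.ker : Set H).Finite := Set.toFinite _
    have hsopen : IsOpen ((α₀.ker : Set H) \ {1})ᶜ :=
      ((hkfin.subset Set.diff_subset).isClosed).isOpen_compl
    have h1s : (1 : H) ∈ ((α₀.ker : Set H) \ {1})ᶜ := by simp
    obtain ⟨V, hV, hVs⟩ := exists_nhds_split_inv (hsopen.mem_nhds h1s)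
    obtain ⟨W, hWV, hWo, hW1⟩ := mem_nhds_iff.mp hV
    apply IsLocalHomeomorph.mk
    intro x
    have hsx : IsOpen ((x * ·) '' W) := (Homeomorph.mulLeft x).isOpenMap _ hWo
    have hxmem : x ∈ (x * ·) '' W := ⟨1, hW1, mul_one x⟩
    have hinj : Set.InjOn (α₀ : H → H) ((x * ·) '' W) := by
      rintro a ⟨v, hv, rfl⟩ b ⟨w, hw, rfl⟩ hab
      have hvw : α₀ v = α₀ w := by
        have := hab
        simp only [map_mul] at this
        exact mul_left_cancel this
      have hdiv : v / w ∈ (α₀.ker : Set H) := by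
        simp [MonoidHom.mem_ker, div_eq_mul_inv, map_mul, hvw]
      have hmem := hVs v (hWV hv) w (hWV hw)
      have : v / w = 1 := by
        by_contra hne
        exact hmem ⟨hdiv, hne⟩
      have : v = w := div_eq_one.mp this
      rw [this]
    exact ⟨OpenPartialHomeomorph.ofContinuousOpenRestrict
        (hinj.toPartialEquiv _ _) (hc.continuousOn) (hopen.restrict hsx) hsx,
      hxmem, fun y _ => rfl⟩
end

section
/- Let A ∈ M_n(ℤ) with det A ≠ 0, let f_A(x) = det(xI − A) be its characteristic polynomial, and write f_A(x) = (1 − x)^k g(x) where k is the algebraic multiplicity of 1 as a root of f_A. If some unimodular polynomial divides g in ℤ[x], then no affine local homeomorphism of 𝕋ⁿ with linear part φ_A is strongly transitive. -/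
/-- The `n`-torus `𝕋ⁿ = (ℝ/ℤ)ⁿ`, written additively. -/
abbrev Torus (n : ℕ) := Fin n → AddCircle (1 : ℝ)

/-- For an integer matrix `A ∈ Mₙ(ℤ)`, the group endomorphism `φ_A : 𝕋ⁿ → 𝕋ⁿ`
induced on the quotient by the linear map `x ↦ Ax` on `ℝⁿ`. -/
noncomputable def phiA {n : ℕ} (A : Matrix (Fin n) (Fin n) ℤ) (x : Torus n) : Torus n :=
  fun i => ∑ j, A i j • x j

/-- A nonconstant monic integer polynomial with constant term `±1` is unimodular. -/
def IsUnimodular (p : Polynomial ℤ) : Prop :=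
  p.Monic ∧ 0 < p.natDegree ∧ (p.coeff 0 = 1 ∨ p.coeff 0 = -1)

section StmtAuxSec

open Matrix Polynomial

namespace StmtAux

noncomputable def chi {n : ℕ} (c : Fin n → ℤ) (x : Torus n) : AddCircle (1:ℝ) :=
  ∑ j, c j • x j

lemma chi_continuous {n : ℕ} (c : Fin n → ℤ) : Continuous (chi c) :=
  continuous_finset_sum _ fun j _ => (continuous_apply j).zsmul (c j)

lemma coe_eq_mk' (x : ℝ) :
    (x : AddCircle (1:ℝ)) = QuotientAddGroup.mk' (AddSubgroup.zmultiples (1:ℝ)) x := rfl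

lemma chi_coe {n : ℕ} (c : Fin n → ℤ) (ξ : Fin n → ℝ) :
    chi c (fun j => ((ξ j : ℝ) : AddCircle (1:ℝ)))
      = ((∑ j, (c j : ℝ) * ξ j : ℝ) : AddCircle (1:ℝ)) := by
  unfold chi
  rw [coe_eq_mk', map_sum]
  refine Finset.sum_congr rfl fun j _ => ?_
  show c j • ((ξ j : ℝ) : AddCircle (1:ℝ)) = _
  rw [coe_eq_mk', ← map_zsmul]
  congr 1
  rw [zsmul_eq_mul]

lemma chi_point_add {n : ℕ} (c : Fin n → ℤ) (x y : Torus n) :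
    chi c (x + y) = chi c x + chi c y := by
  unfold chi
  rw [← Finset.sum_add_distrib]
  exact Finset.sum_congr rfl fun j _ => by rw [Pi.add_apply, smul_add]

lemma chi_vec_neg {n : ℕ} (a : Fin n → ℤ) (x : Torus n) : chi (-a) x = - chi a x := by
  unfold chi
  rw [← Finset.sum_neg_distrib]
  exact Finset.sum_congr rfl fun j _ => by rw [Pi.neg_apply, neg_smul]

lemma chi_vec_zsmul {n : ℕ} (z : ℤ) (a : Fin n → ℤ) (x : Torus n) :
    chi (z • a) x = z • chi a x := by
  unfold chi
  rw [Finset.smul_sum]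
  exact Finset.sum_congr rfl fun j _ => by rw [Pi.smul_apply, smul_assoc]

lemma chi_vec_sum {n : ℕ} {ι : Type*} (s : Finset ι) (f : ι → (Fin n → ℤ)) (x : Torus n) :
    chi (∑ i ∈ s, f i) x = ∑ i ∈ s, chi (f i) x := by
  unfold chi
  rw [Finset.sum_comm]
  exact Finset.sum_congr rfl fun j _ => by rw [Finset.sum_apply, Finset.sum_smul]

lemma chi_phiA {n : ℕ} (c : Fin n → ℤ) (A : Matrix (Fin n) (Fin n) ℤ) (x : Torus n) :
    chi c (phiA A x) = chi (c ᵥ* A) x := by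
  unfold chi phiA
  simp only [Finset.smul_sum, smul_smul]
  rw [Finset.sum_comm]
  refine Finset.sum_congr rfl fun l _ => ?_
  rw [← Finset.sum_smul]
  have hv : (c ᵥ* A) l = ∑ i : Fin n, c i * A i l := by
    simp [Matrix.vecMul, dotProduct]
  rw [hv]

lemma zsmul_surj (e : ℤ) (he : e ≠ 0) :
    Function.Surjective (fun x : AddCircle (1:ℝ) => e • x) := by
  intro y
  obtain ⟨r, hr⟩ := QuotientAddGroup.mk'_surjective (AddSubgroup.zmultiples (1:ℝ)) y
  refine ⟨((r / (e:ℝ) : ℝ) : AddCircle (1:ℝ)), ?_⟩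
  show e • ((r / (e:ℝ) : ℝ) : AddCircle (1:ℝ)) = y
  rw [coe_eq_mk', ← map_zsmul, zsmul_eq_mul, mul_div_cancel₀]
  · exact hr
  · exact_mod_cast he

lemma half_ne_zero' : (((1:ℝ)/2 : ℝ) : AddCircle (1:ℝ)) ≠ 0 := by
  intro h
  rw [AddCircle.coe_eq_zero_iff] at h
  obtain ⟨nn, hnn⟩ := h
  rw [zsmul_eq_mul, mul_one] at hnn
  have : (2 * nn : ℤ) = 1 := by
    have h2 : ((2 * nn : ℤ) : ℝ) = 1 := by push_cast; linarith
    exact_mod_cast h2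
  omega

lemma vecMul_smulMat {R : Type*} [CommRing R] {a b : ℕ} (v : Fin a → R) (t : R)
    (M : Matrix (Fin a) (Fin b) R) : v ᵥ* (t • M) = t • (v ᵥ* M) := by
  ext j
  simp only [Matrix.vecMul, dotProduct, Pi.smul_apply, Matrix.smul_apply, smul_eq_mul,
    Finset.mul_sum]
  exact Finset.sum_congr rfl fun i _ => by ring

lemma vecMul_sumMat {R : Type*} [CommRing R] {ι : Type*} {a b : ℕ} (s : Finset ι)
    (v : Fin a → R) (M : ι → Matrix (Fin a) (Fin b) R) :
    v ᵥ* (∑ i ∈ s, M i) = ∑ i ∈ s, v ᵥ* (M i) := by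
  ext j
  simp only [Matrix.vecMul, dotProduct, Finset.sum_apply, Matrix.sum_apply,
    Finset.mul_sum]
  rw [Finset.sum_comm]

lemma vecMul_pow_eig {n : ℕ} {Mc : Matrix (Fin n) (Fin n) ℂ} {u : Fin n → ℂ} {α : ℂ}
    (huM : u ᵥ* Mc = α • u) : ∀ i : ℕ, u ᵥ* (Mc ^ i) = (α ^ i) • u := by
  intro i
  induction i with
  | zero => simp [Matrix.vecMul_one]
  | succ i ih =>
    rw [pow_succ, ← Matrix.vecMul_vecMul, ih, Matrix.smul_vecMul, huM, smul_smul, pow_succ]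

end StmtAux

end StmtAuxSec

open Matrix Polynomial StmtAux in
theorem stmt7 {n : ℕ} (A : Matrix (Fin n) (Fin n) ℤ) (hA : A.det ≠ 0)
    (k : ℕ) (g : Polynomial ℤ)
    (hfA : A.charpoly = (1 - Polynomial.X) ^ k * g) (hg1 : g.eval 1 ≠ 0)
    (hdiv : ∃ q : Polynomial ℤ, IsUnimodular q ∧ q ∣ g) :
    ∀ lam : Torus n,
      IsLocalHomeomorph (fun x : Torus n => lam + phiA A x) →
        ¬ StronglyTransitive (fun x : Torus n => lam + phiA A x) := by
  classical
  intro lam _hlh hST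
  obtain ⟨q, huni, hqg⟩ := hdiv
  obtain ⟨hqm, hqd, hq0⟩ := huni
  have hqchar : q ∣ A.charpoly := by
    rw [hfA]; exact hqg.trans (Dvd.intro_left _ rfl)
  have hq1 : q.eval 1 ≠ 0 := fun h => hg1 (Polynomial.eval_eq_zero_of_dvd_of_eval_eq_zero hqg h)
  set qq : Polynomial ℚ := q.map (algebraMap ℤ ℚ) with hqq
  have hqqm : qq.Monic := hqm.map _
  have hqqdeg : qq.natDegree = q.natDegree := hqm.natDegree_map _
  have hqqnu : ¬ IsUnit qq := by
    intro h
    have := Polynomial.natDegree_eq_zero_of_isUnit h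
    omega
  have hpex : ∃ pp : Polynomial ℚ, pp.Monic ∧ Irreducible pp ∧ pp ∣ qq := by
    obtain ⟨p₁, hp₁irr, hp₁dvd⟩ := WfDvdMonoid.exists_irreducible_factor hqqnu hqqm.ne_zero
    have hp₁0 : p₁ ≠ 0 := hp₁irr.ne_zero
    have hassoc : Associated p₁ (p₁ * Polynomial.C (p₁.leadingCoeff)⁻¹) :=
      ⟨(Polynomial.isUnit_C.2 (IsUnit.inv (Polynomial.leadingCoeff_ne_zero.mpr hp₁0).isUnit)).unit,
        rfl⟩
    exact ⟨p₁ * Polynomial.C (p₁.leadingCoeff)⁻¹, Polynomial.monic_mul_leadingCoeff_inv hp₁0,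
      hassoc.irreducible hp₁irr, (hassoc.symm.dvd).trans hp₁dvd⟩
  obtain ⟨p, hpm, hpirr, hpdvd⟩ := hpex
  have hpdeg : 0 < p.natDegree := by
    rcases Nat.eq_zero_or_pos p.natDegree with h | h
    · exact absurd (hpm.natDegree_eq_zero.mp h ▸ isUnit_one) hpirr.not_isUnit
    · exact h
  -- Gauss descent
  obtain ⟨D, hD⟩ := IsIntegrallyClosed.eq_map_mul_C_of_dvd ℚ hqm hpdvd
  rw [hpm.leadingCoeff, Polynomial.C_1, mul_one] at hD
  have hDm : D.Monic := Polynomial.monic_of_injective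
    (f := algebraMap ℤ ℚ) (fun a b h => by exact_mod_cast h) (by rw [hD]; exact hpm)
  have hDq : D ∣ q := Polynomial.Monic.dvd_of_fraction_map_dvd_fraction_map (K := ℚ) hqm hDm
    (by rw [hD]; exact hpdvd)
  set m : ℕ := D.natDegree with hmD
  have hmp : p.natDegree = m := by rw [← hD]; exact hDm.natDegree_map _
  have hm1 : 0 < m := hmp ▸ hpdeg
  obtain ⟨sq, hqDs⟩ := hDq
  have hD0 : D.coeff 0 = 1 ∨ D.coeff 0 = -1 := by
    have hc0 : q.coeff 0 = D.coeff 0 * sq.coeff 0 := by rw [hqDs, Polynomial.mul_coeff_zero]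
    have hu : IsUnit (D.coeff 0) := by
      refine isUnit_of_mul_isUnit_left (y := sq.coeff 0) ?_
      rw [← hc0]
      rcases hq0 with h | h <;> rw [h] <;> [exact isUnit_one; exact IsUnit.neg isUnit_one]
    exact Int.isUnit_iff.mp hu
  have hD1 : D.eval 1 ≠ 0 := by
    intro h
    exact hq1 (by rw [hqDs, Polynomial.eval_mul, h, zero_mul])
  -- the rational matrix and a left kernel vector of aeval Mq p
  set Mq : Matrix (Fin n) (Fin n) ℚ := A.map (fun t : ℤ => (t : ℚ)) with hMq
  have hqqchar : qq ∣ Mq.charpoly := by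
    have h1 := Polynomial.map_dvd (algebraMap ℤ ℚ) hqchar
    have h2 : Mq.charpoly = (A.charpoly).map (algebraMap ℤ ℚ) := by
      have h3 : Mq = A.map ⇑(algebraMap ℤ ℚ) := rfl
      rw [h3, Matrix.charpoly_map]
    rw [h2]; exact h1
  have hpchar : p ∣ Mq.charpoly := hpdvd.trans hqqchar
  have hker : ∃ wq : Fin n → ℚ, wq ≠ 0 ∧ wq ᵥ* (Polynomial.aeval Mq p) = 0 := by
    set Mc : Matrix (Fin n) (Fin n) ℂ := Mq.map (algebraMap ℚ ℂ) with hMc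
    set pc : Polynomial ℂ := p.map (algebraMap ℚ ℂ) with hpc
    have hpcdvd : pc ∣ Mc.charpoly := by
      rw [hMc, Matrix.charpoly_map]
      exact Polynomial.map_dvd _ hpchar
    have hpcdeg : 0 < pc.degree := by
      rw [Polynomial.degree_eq_natDegree (by
        intro h
        have h4 : p = 0 := Polynomial.map_eq_zero_iff (algebraMap ℚ ℂ).injective |>.mp (hpc ▸ h)
        simp [h4] at hpdeg)]
      have h5 : pc.natDegree = p.natDegree := Polynomial.natDegree_map_eq_of_injective
        (algebraMap ℚ ℂ).injective p
      exact_mod_cast h5 ▸ hpdeg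
    obtain ⟨α, hα⟩ := Complex.exists_root hpcdeg
    have hαchar : Mc.charpoly.eval α = 0 :=
      Polynomial.eval_eq_zero_of_dvd_of_eval_eq_zero hpcdvd hα
    have hdet0 : (α • (1 : Matrix (Fin n) (Fin n) ℂ) - Mc).det = 0 := by
      have h1 := (Polynomial.evalRingHom α).map_det (Matrix.charmatrix Mc)
      have h2 : ((Polynomial.evalRingHom α).mapMatrix (Matrix.charmatrix Mc))
          = α • (1 : Matrix (Fin n) (Fin n) ℂ) - Mc := by
        ext i j
        by_cases hij : i = j
        · subst hij
          simp [Matrix.charmatrix_apply, Matrix.diagonal_apply]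
        · simp [Matrix.charmatrix_apply, Matrix.diagonal_apply, hij, Matrix.one_apply]
      rw [← h2, ← h1]
      exact hαchar
    obtain ⟨u, hu0, huk⟩ := Matrix.exists_vecMul_eq_zero_iff.mpr hdet0
    have huM : u ᵥ* Mc = α • u := by
      have h3 : u ᵥ* (α • (1 : Matrix (Fin n) (Fin n) ℂ)) - u ᵥ* Mc = 0 := by
        rw [← Matrix.vecMul_sub]; exact huk
      have h4 : u ᵥ* (α • (1 : Matrix (Fin n) (Fin n) ℂ)) = α • u := by
        rw [vecMul_smulMat, Matrix.vecMul_one]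
      rw [h4] at h3
      exact (sub_eq_zero.mp h3).symm
    have hkerc : u ᵥ* (Polynomial.aeval Mc pc) = 0 := by
      rw [Polynomial.aeval_eq_sum_range (p := pc) Mc, vecMul_sumMat]
      have h6 : ∀ i ∈ Finset.range (pc.natDegree + 1),
          u ᵥ* (pc.coeff i • Mc ^ i) = (pc.coeff i * α ^ i) • u := by
        intro i _
        rw [vecMul_smulMat, vecMul_pow_eig huM, smul_smul]
      rw [Finset.sum_congr rfl h6, ← Finset.sum_smul, ← Polynomial.eval_eq_sum_range,
        show eval α pc = 0 from hα, zero_smul]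
    have hdetc : (Polynomial.aeval Mc pc).det = 0 :=
      Matrix.exists_vecMul_eq_zero_iff.mp ⟨u, hu0, hkerc⟩
    have hdetq : (Polynomial.aeval Mq p).det = 0 := by
      have h5 : Polynomial.aeval Mc pc
          = (AlgHom.mapMatrix (Algebra.ofId ℚ ℂ)) (Polynomial.aeval Mq p) := by
        rw [hpc, Polynomial.aeval_map_algebraMap, ← Polynomial.aeval_algHom_apply]
        congr 1
      have h6 := (algebraMap ℚ ℂ).map_det (Polynomial.aeval Mq p)
      apply (algebraMap ℚ ℂ).injective
      rw [map_zero, h6]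
      rw [h5] at hdetc
      exact hdetc
    exact Matrix.exists_vecMul_eq_zero_iff.mpr hdetq
  obtain ⟨wq, hwq0, hwqk⟩ := hker
  -- annihilator argument
  have hann : ∀ T : Polynomial ℚ, wq ᵥ* (Polynomial.aeval Mq T) = 0 → ¬ p ∣ T → False := by
    intro T hT hnd
    obtain ⟨a, b, hab⟩ := (hpirr.coprime_iff_not_dvd.mpr hnd)
    apply hwq0
    have h1 : wq ᵥ* (Polynomial.aeval Mq (a * p + b * T)) = wq ᵥ* 1 := by
      rw [hab]; simp
    rw [Matrix.vecMul_one] at h1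
    rw [map_add, Matrix.vecMul_add, mul_comm a p, mul_comm b T, _root_.map_mul, _root_.map_mul,
      ← Matrix.vecMul_vecMul, ← Matrix.vecMul_vecMul, hT, hwqk, Matrix.zero_vecMul,
      Matrix.zero_vecMul, add_zero] at h1
    exact h1.symm
  -- linear independence of wq, wq Mq, ..., wq Mq^{m-1}
  have hindep : ∀ v : Fin m → ℚ, (∑ i : Fin m, v i • (wq ᵥ* (Mq ^ (i : ℕ)))) = 0 → v = 0 := by
    intro v hv
    by_contra hvne
    obtain ⟨i₀, hi₀⟩ := Function.ne_iff.mp hvne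
    set T : Polynomial ℚ := ∑ i : Fin m, Polynomial.C (v i) * Polynomial.X ^ (i : ℕ) with hT
    have hcoeff : ∀ i₀ : Fin m, T.coeff (i₀ : ℕ) = v i₀ := by
      intro i₀
      rw [hT, Polynomial.finset_sum_coeff]
      rw [Finset.sum_eq_single i₀]
      · simp
      · intro i _ hne
        rw [Polynomial.coeff_C_mul, Polynomial.coeff_X_pow, if_neg, mul_zero]
        exact fun h => hne (Fin.ext (by omega))
      · simp
    have hTne : T ≠ 0 := fun h => hi₀ (by rw [← hcoeff i₀, h, Polynomial.coeff_zero]; rfl)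
    have hTdeg : T.degree < (m : WithBot ℕ) := by
      refine lt_of_le_of_lt (Polynomial.degree_sum_le _ _) ?_
      rw [Finset.sup_lt_iff (by exact_mod_cast WithBot.bot_lt_coe m)]
      intro i _
      refine lt_of_le_of_lt (Polynomial.degree_C_mul_X_pow_le _ _) ?_
      exact_mod_cast i.isLt
    have hTndvd : ¬ p ∣ T := by
      intro hd
      have h1 := Polynomial.natDegree_le_of_dvd hd hTne
      have h2 : T.natDegree < m := (Polynomial.natDegree_lt_iff_degree_lt hTne).mpr hTdeg
      omega
    refine hann T ?_ hTndvd
    rw [hT, map_sum, vecMul_sumMat]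
    rw [← hv]
    refine Finset.sum_congr rfl fun i _ => ?_
    rw [_root_.map_mul, Polynomial.aeval_C, map_pow, Polynomial.aeval_X, ← Algebra.smul_def,
      vecMul_smulMat]
  -- scale wq to an integer vector
  obtain ⟨bden, hbden⟩ := IsLocalization.exist_integer_multiples
    (nonZeroDivisors ℤ) (S := ℚ) Finset.univ wq
  have hbden' : ∀ j : Fin n, ∃ z : ℤ, (z : ℚ) = (bden : ℤ) • wq j := by
    intro j
    obtain ⟨z, hz⟩ := hbden j (Finset.mem_univ j)
    exact ⟨z, by exact_mod_cast hz⟩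
  choose wz hwz using hbden'
  have hbne : ((bden : ℤ) : ℚ) ≠ 0 := by
    exact_mod_cast nonZeroDivisors.coe_ne_zero bden
  -- the integer rows
  set c : ℕ → (Fin n → ℤ) := fun i => wz ᵥ* (A ^ i) with hc
  have hcast : ∀ i : ℕ, (fun j => ((c i j : ℚ))) = ((bden : ℤ) : ℚ) • (wq ᵥ* (Mq ^ i)) := by
    intro i
    funext jj
    have h1 : (c i jj : ℚ) = ∑ t, (wz t : ℚ) * ((A ^ i) t jj : ℚ) := by
      rw [hc]
      push_cast [Matrix.vecMul, dotProduct]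
      rfl
    have hMq' : Mq = (Int.castRingHom ℚ).mapMatrix A := rfl
    have h2 : Mq ^ i = (A ^ i).map (fun t : ℤ => (t : ℚ)) := by
      rw [hMq', ← map_pow]
      rfl
    rw [h1]
    rw [Pi.smul_apply, smul_eq_mul]
    rw [h2]
    simp only [Matrix.vecMul, dotProduct, Matrix.map_apply, Finset.mul_sum]
    refine Finset.sum_congr rfl fun t _ => ?_
    rw [hwz t, zsmul_eq_mul]
    ring
  -- the integer linear recursion
  have h3 : wq ᵥ* (Mq ^ m) + ∑ j ∈ Finset.range m, ((D.coeff j : ℚ)) • (wq ᵥ* (Mq ^ j)) = 0 := by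
    have h0 : wq ᵥ* (Polynomial.aeval Mq p) = 0 := hwqk
    rw [Polynomial.aeval_eq_sum_range, hmp, Finset.sum_range_succ] at h0
    have hpm' : p.coeff m = 1 := by rw [← hmp]; exact hpm.coeff_natDegree
    rw [hpm', one_smul, Matrix.vecMul_add, vecMul_sumMat, add_comm] at h0
    rw [← h0]
    congr 1
    refine Finset.sum_congr rfl fun j _ => ?_
    rw [vecMul_smulMat]
    congr 1
    rw [← hD, Polynomial.coeff_map]
    rfl
  have hq_rel : (fun jj => ((c m jj : ℚ)))
      + ∑ j ∈ Finset.range m, ((D.coeff j : ℚ)) • (fun jj => ((c j jj : ℚ))) = 0 := by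
    have hterm : ∀ j, ((D.coeff j : ℚ)) • (fun jj => ((c j jj : ℚ)))
        = ((D.coeff j : ℚ)) • (((bden : ℤ) : ℚ) • (wq ᵥ* (Mq ^ j))) := by
      intro j; rw [hcast j]
    rw [hcast m, Finset.sum_congr rfl (fun j _ => hterm j)]
    have h7 : (((bden : ℤ) : ℚ)) • (wq ᵥ* (Mq ^ m))
        + ∑ j ∈ Finset.range m, ((D.coeff j : ℚ)) • ((((bden : ℤ) : ℚ)) • (wq ᵥ* (Mq ^ j)))
        = ((bden : ℤ) : ℚ) •
            (wq ᵥ* (Mq ^ m) + ∑ j ∈ Finset.range m, ((D.coeff j : ℚ)) • (wq ᵥ* (Mq ^ j))) := by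
      rw [smul_add, Finset.smul_sum]
      congr 1
      exact Finset.sum_congr rfl fun j _ => (smul_comm _ _ _)
    rw [h7, h3, smul_zero]
  have hrelZ : c m = - ∑ j ∈ Finset.range m, D.coeff j • c j := by
    funext jj
    have h4 := congrFun hq_rel jj
    simp only [Pi.add_apply, Finset.sum_apply, Pi.smul_apply, smul_eq_mul, Pi.zero_apply] at h4
    have h5 : ((c m jj : ℚ)) = ((- ∑ j ∈ Finset.range m, D.coeff j * c j jj : ℤ) : ℚ) := by
      push_cast
      linarith [h4]
    have h6 : c m jj = - ∑ j ∈ Finset.range m, D.coeff j * c j jj := by exact_mod_cast h5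
    rw [h6]
    simp [smul_eq_mul]
  have hcsucc : ∀ i : ℕ, (c i) ᵥ* A = c (i+1) := by
    intro i
    show (wz ᵥ* (A ^ i)) ᵥ* A = wz ᵥ* (A ^ (i+1))
    rw [Matrix.vecMul_vecMul, ← pow_succ]
  -- a rational right inverse for the row matrix
  set Cq : Matrix (Fin m) (Fin n) ℚ :=
    Matrix.of (fun (i : Fin m) (j : Fin n) => ((c (i : ℕ) j : ℚ))) with hCq
  have hCind : ∀ v : Fin m → ℚ, v ᵥ* Cq = 0 → v = 0 := by
    intro v hv
    apply hindep
    have h1 : ∑ i : Fin m, v i • (fun jj => ((c (i : ℕ) jj : ℚ))) = 0 := by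
      funext jj
      have h2 := congrFun hv jj
      simp only [Matrix.vecMul, dotProduct, Matrix.of_apply, Pi.zero_apply] at h2
      simp only [Finset.sum_apply, Pi.smul_apply, smul_eq_mul, Pi.zero_apply]
      rw [← h2]
      rfl
    have h2 : ((bden : ℤ) : ℚ) • (∑ i : Fin m, v i • (wq ᵥ* (Mq ^ (i : ℕ)))) = 0 := by
      rw [Finset.smul_sum, ← h1]
      refine Finset.sum_congr rfl fun i _ => ?_
      rw [hcast (i : ℕ)]
      rw [smul_comm]
    rcases smul_eq_zero.mp h2 with h | h
    · exact absurd h hbne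
    · exact h
  have hRmat : ∃ Rmat : Matrix (Fin n) (Fin m) ℚ, Cq * Rmat = 1 := by
    set G : Matrix (Fin m) (Fin m) ℚ := Cq * Cq.transpose with hG
    have hGinj : Function.Injective G.mulVec := by
      have hker : ∀ z : Fin m → ℚ, G *ᵥ z = 0 → z = 0 := by
        intro z hz
        have h0 : (z ᵥ* Cq) ⬝ᵥ (z ᵥ* Cq) = 0 := by
          have h1 : z ⬝ᵥ (G *ᵥ z) = 0 := by rw [hz]; simp [dotProduct]
          rw [hG, ← Matrix.mulVec_mulVec, Matrix.mulVec_transpose,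
            dotProduct_mulVec] at h1
          exact h1
        have h2 : z ᵥ* Cq = 0 := by
          funext j
          have h3 := (Finset.sum_eq_zero_iff_of_nonneg
            (fun i _ => mul_self_nonneg ((z ᵥ* Cq) i))).mp h0 j (Finset.mem_univ j)
          exact mul_self_eq_zero.mp h3
        exact hCind z h2
      intro x y hxy
      have h4 : G *ᵥ (x - y) = 0 := by rw [Matrix.mulVec_sub, hxy, sub_self]
      exact sub_eq_zero.mp (hker _ h4)
    have hGunit : IsUnit G := Matrix.mulVec_injective_iff_isUnit.mp hGinj
    refine ⟨Cq.transpose * G⁻¹, ?_⟩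
    rw [← Matrix.mul_assoc, ← hG]
    exact Matrix.mul_nonsing_inv _ ((Matrix.isUnit_iff_isUnit_det G).mp hGunit)
  obtain ⟨Rmat, hCR⟩ := hRmat
  -- joint surjectivity of the characters
  have hsurj : ∀ ρ : Fin m → AddCircle (1:ℝ),
      ∃ x : Torus n, ∀ i : Fin m, chi (c (i : ℕ)) x = ρ i := by
    intro ρ
    choose r hr using fun i =>
      QuotientAddGroup.mk'_surjective (AddSubgroup.zmultiples (1:ℝ)) (ρ i)
    refine ⟨fun j => (((∑ kk, ((Rmat j kk : ℚ) : ℝ) * r kk : ℝ)) : AddCircle (1:ℝ)), ?_⟩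
    intro i
    rw [chi_coe]
    have key : (∑ j, ((c (i:ℕ) j : ℤ) : ℝ) * (∑ kk, ((Rmat j kk : ℚ) : ℝ) * r kk)) = r i := by
      have hswap : (∑ j, ((c (i:ℕ) j : ℤ) : ℝ) * (∑ kk, ((Rmat j kk : ℚ) : ℝ) * r kk))
          = ∑ kk, (∑ j, ((c (i:ℕ) j : ℤ) : ℝ) * ((Rmat j kk : ℚ) : ℝ)) * r kk := by
        simp only [Finset.mul_sum, Finset.sum_mul]
        rw [Finset.sum_comm]
        exact Finset.sum_congr rfl fun kk _ => Finset.sum_congr rfl fun j _ => by ring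
      rw [hswap]
      have hentry : ∀ kk : Fin m, (∑ j, ((c (i:ℕ) j : ℤ) : ℝ) * ((Rmat j kk : ℚ) : ℝ))
          = if i = kk then (1:ℝ) else 0 := by
        intro kk
        have h1 := congrFun (congrFun hCR i) kk
        have h2 : (Cq * Rmat) i kk = ∑ j, ((c (i:ℕ) j : ℚ)) * Rmat j kk := by
          simp [hCq, Matrix.mul_apply]
        rw [h2] at h1
        have h3 : ((∑ j, ((c (i:ℕ) j : ℚ)) * Rmat j kk : ℚ) : ℝ)
            = ∑ j, ((c (i:ℕ) j : ℤ) : ℝ) * ((Rmat j kk : ℚ) : ℝ) := by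
          push_cast
          rfl
        rw [← h3, h1]
        by_cases h : i = kk <;> simp [h, Matrix.one_apply]
      rw [Finset.sum_congr rfl fun kk _ => by rw [hentry kk]]
      simp [Finset.sum_ite_eq, Finset.mem_univ]
    rw [key]
    exact hr i
  -- the dynamical argument
  set T : Torus n → Torus n := fun x => lam + phiA A x with hTdef
  set sc : ℕ → AddCircle (1:ℝ) := fun j => - ∑ i ∈ Finset.range j, chi (c i) lam with hsc
  set σ : AddCircle (1:ℝ) := ∑ j ∈ Finset.range (m+1), D.coeff j • sc j with hσ
  obtain ⟨p0, hp0⟩ := zsmul_surj (D.eval 1) hD1 (-σ)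
  set pt : ℕ → AddCircle (1:ℝ) := fun j => p0 + sc j with hpt
  have hpt_succ : ∀ j : ℕ, pt (j+1) = pt j - chi (c j) lam := by
    intro j
    show p0 + sc (j+1) = (p0 + sc j) - chi (c j) lam
    rw [hsc]
    simp only [Finset.sum_range_succ]
    abel
  have hstar : ∑ j ∈ Finset.range (m+1), D.coeff j • pt j = 0 := by
    have h1 : ∀ j, D.coeff j • pt j = D.coeff j • p0 + D.coeff j • sc j := by
      intro j; rw [hpt]; exact smul_add _ _ _
    rw [Finset.sum_congr rfl fun j _ => h1 j, Finset.sum_add_distrib, ← hσ, ← Finset.sum_smul]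
    have h2 : ∑ j ∈ Finset.range (m+1), D.coeff j = D.eval 1 := by
      rw [Polynomial.eval_eq_sum_range, ← hmD]
      exact Finset.sum_congr rfl fun j _ => by rw [one_pow, mul_one]
    rw [h2, show Polynomial.eval 1 D • p0 = -σ from hp0]
    abel
  set Z : Set (Torus n) := {x | ∀ i < m, chi (c i) x = pt i} with hZ
  have hZclosed : IsClosed Z := by
    have h1 : Z = ⋂ (i : ℕ), ⋂ (_ : i < m), {x : Torus n | chi (c i) x = pt i} := by
      ext x; simp [hZ, Set.mem_iInter]
    rw [h1]
    exact isClosed_iInter fun i => isClosed_iInter fun _ =>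
      isClosed_eq (chi_continuous _) continuous_const
  have hZne : Z.Nonempty := by
    obtain ⟨x₀, hx₀⟩ := hsurj (fun i : Fin m => pt (i : ℕ))
    exact ⟨x₀, fun i hi => hx₀ ⟨i, hi⟩⟩
  have hVne : Zᶜ.Nonempty := by
    obtain ⟨x₁, hx₁⟩ := hsurj (fun i : Fin m =>
      pt (i : ℕ) + (if (i : ℕ) = 0 then (((1:ℝ)/2 : ℝ) : AddCircle (1:ℝ)) else 0))
    refine ⟨x₁, fun hZmem => ?_⟩
    have h1 : chi (c 0) x₁ = pt 0 := hZmem 0 hm1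
    have h2 := hx₁ ⟨0, hm1⟩
    simp only [if_pos rfl] at h2
    rw [h1] at h2
    exact half_ne_zero' (left_eq_add.mp h2)
  have hinv : ∀ x : Torus n, T x ∈ Z → x ∈ Z := by
    intro x hx
    have hstep : ∀ i < m, chi (c (i+1)) x = pt (i+1) := by
      intro i hi
      have h1 : chi (c i) (T x) = pt i := hx i hi
      have h2 : chi (c i) (T x) = chi (c i) lam + chi (c (i+1)) x := by
        rw [hTdef]
        show chi (c i) (lam + phiA A x) = _
        rw [chi_point_add, chi_phiA, hcsucc]
      rw [h2] at h1
      rw [hpt_succ i, ← h1]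
      abel
    intro i hi
    cases i with
    | succ i' => exact hstep i' (by omega)
    | zero =>
    have hm' : chi (c m) x = pt m := by
      have h1 := hstep (m-1) (by omega)
      rwa [Nat.sub_add_cancel hm1] at h1
    have hrel : chi (c m) x = - ∑ j ∈ Finset.range m, D.coeff j • chi (c j) x := by
      rw [hrelZ, chi_vec_neg, chi_vec_sum]
      congr 1
      exact Finset.sum_congr rfl fun j _ => chi_vec_zsmul _ _ _
    have e1 : pt m + ∑ j ∈ Finset.range m, D.coeff j • chi (c j) x = 0 := by
      rw [← hm', hrel]; abel
    have e2 : pt m + ∑ j ∈ Finset.range m, D.coeff j • pt j = 0 := by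
      have h1 := hstar
      rw [Finset.sum_range_succ] at h1
      have hcm : D.coeff m = 1 := hDm.coeff_natDegree
      rw [hcm, one_smul] at h1
      rw [← h1]; abel
    have hsum0 : ∑ j ∈ Finset.range m, D.coeff j • (chi (c j) x - pt j) = 0 := by
      have h5 : ∀ j, D.coeff j • (chi (c j) x - pt j)
          = D.coeff j • chi (c j) x - D.coeff j • pt j := fun j => smul_sub _ _ _
      have e1' : ∑ j ∈ Finset.range m, D.coeff j • chi (c j) x = -(pt m) :=
        (neg_eq_of_add_eq_zero_right e1).symm
      have e2' : ∑ j ∈ Finset.range m, D.coeff j • pt j = -(pt m) :=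
        (neg_eq_of_add_eq_zero_right e2).symm
      rw [Finset.sum_congr rfl fun j _ => h5 j, Finset.sum_sub_distrib, e1', e2', sub_self]
    have hothers : ∀ j ∈ Finset.range m, j ≠ 0 → D.coeff j • (chi (c j) x - pt j) = 0 := by
      intro j hj hj0
      have hjm := Finset.mem_range.mp hj
      cases j with
      | zero => exact absurd rfl hj0
      | succ j' =>
        rw [hstep j' (by omega), sub_self, smul_zero]
    have h0 : D.coeff 0 • (chi (c 0) x - pt 0) = 0 := by
      rw [← hsum0]
      exact (Finset.sum_eq_single_of_mem 0 (Finset.mem_range.mpr hm1) hothers).symm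
    have h9 : chi (c 0) x - pt 0 = 0 := by
      rcases hD0 with h | h <;> rw [h] at h0
      · rwa [one_smul] at h0
      · have h10 := congrArg (fun t => -t) h0
        simpa using h10
    exact sub_eq_zero.mp h9
  have hiter : ∀ (i : ℕ) (x : Torus n), T^[i] x ∈ Z → x ∈ Z := by
    intro i
    induction i with
    | zero => intro x hx; exact hx
    | succ i ih =>
      intro x hx
      rw [Function.iterate_succ_apply] at hx
      exact hinv x (ih (T x) hx)
  obtain ⟨N, hN⟩ := hST Zᶜ hZclosed.isOpen_compl hVne
  obtain ⟨x₀, hx₀⟩ := hZne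
  have hx₀' : x₀ ∈ ⋃ i ∈ Finset.range (N + 1), T^[i] '' Zᶜ := by
    rw [hN]; trivial
  simp only [Set.mem_iUnion, Set.mem_image] at hx₀'
  obtain ⟨i, _, v, hvc, hvx⟩ := hx₀'
  exact hvc (hiter i v (by rw [hvx]; exact hx₀))
end

section
/- Let A ∈ M_n(ℤ) with det A ≠ 0, let λ ∈ 𝕋ⁿ, and suppose the affine map T(x) = λ + φ_A(x) on 𝕋ⁿ is strongly transitive. Then the smallest closed subgroup of 𝕋ⁿ containing λ and the set {φ_A(x) − x : x ∈ 𝕋ⁿ} is all of 𝕋ⁿ. -/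
theorem stmt8 {n : ℕ} (A : Matrix (Fin n) (Fin n) ℤ) (hA : A.det ≠ 0)
    (lam : Torus n)
    (hst : StronglyTransitive (fun x : Torus n => lam + phiA A x)) :
    AddSubgroup.topologicalClosure
      (AddSubgroup.closure (insert lam {y : Torus n | ∃ x : Torus n, y = phiA A x - x})) = ⊤ := by
  set H := AddSubgroup.topologicalClosure
      (AddSubgroup.closure (insert lam {y : Torus n | ∃ x : Torus n, y = phiA A x - x})) with hHdef
  by_contra hne
  have hlam : lam ∈ H :=
    AddSubgroup.le_topologicalClosure _ (AddSubgroup.subset_closure (Set.mem_insert _ _))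
  have hgen : ∀ x : Torus n, phiA A x - x ∈ H := fun x =>
    AddSubgroup.le_topologicalClosure _
      (AddSubgroup.subset_closure (Set.mem_insert_of_mem _ ⟨x, rfl⟩))
  set T := fun x : Torus n => lam + phiA A x with hT
  have step : ∀ x, T x - x ∈ H := by
    intro x
    have h : T x - x = lam + (phiA A x - x) := by simp [hT]; abel
    rw [h]
    exact H.add_mem hlam (hgen x)
  have iter : ∀ i x, T^[i] x - x ∈ H := by
    intro i
    induction i with
    | zero => intro x; simpa using H.zero_mem
    | succ k ih =>
      intro x
      have h : T^[k+1] x - x = (T^[k] (T x) - T x) + (T x - x) := by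
        rw [Function.iterate_succ_apply]; abel
      rw [h]
      exact H.add_mem (ih (T x)) (step x)
  obtain ⟨x0, hx0⟩ : ∃ x0 : Torus n, x0 ∉ H :=
    not_forall.mp (fun h => hne ((AddSubgroup.eq_top_iff' H).mpr h))
  have hclosed : IsClosed (H : Set (Torus n)) := AddSubgroup.isClosed_topologicalClosure _
  obtain ⟨N, hN⟩ := hst {x : Torus n | x ∉ H} hclosed.isOpen_compl ⟨x0, hx0⟩
  have h0 : (0 : Torus n) ∈ ⋃ i ∈ Finset.range (N + 1), T^[i] '' {x : Torus n | x ∉ H} := by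
    rw [hN]; trivial
  simp only [Set.mem_iUnion, Set.mem_image, Set.mem_setOf_eq] at h0
  obtain ⟨i, _, x, hx, hix⟩ := h0
  refine hx ?_
  have := iter i x
  rw [hix] at this
  have : -x ∈ H := by simpa using this
  simpa using H.neg_mem this
end

section
/- Let φ : 𝕋 → 𝕋 be a local homeomorphism of the circle 𝕋 = ℝ/ℤ of degree d with |d| ≥ 2, and assume φ is strongly transitive. Then φ is topologically conjugate to the endomorphism m_d induced by t ↦ dt on ℝ, i.e. there is a homeomorphism h of 𝕋 with h ∘ φ = m_d ∘ h. -/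
open Set Function Filter Topology

/-- A continuous open map `ℝ → ℝ` is injective. -/
lemma aux_inj_of_open {g : ℝ → ℝ} (hg : Continuous g) (ho : IsOpenMap g) :
    Function.Injective g := by
  have key : ∀ a b : ℝ, a < b → g a = g b → False := by
    intro a b hab hgab
    have hne : (Icc a b).Nonempty := nonempty_Icc.2 hab.le
    obtain ⟨c, hc, hcmax⟩ := isCompact_Icc.exists_isMaxOn hne hg.continuousOn
    obtain ⟨c', hc', hcmin⟩ := isCompact_Icc.exists_isMinOn hne hg.continuousOn
    have hopen : IsOpen (g '' Ioo a b) := ho _ isOpen_Ioo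
    have hsub : Ioo a b ⊆ Icc a b := Ioo_subset_Icc_self
    by_cases h1 : g a < g c
    · have hcio : c ∈ Ioo a b := by
        rcases hc with ⟨h₁, h₂⟩
        constructor
        · rcases h₁.eq_or_lt with h | h
          · exfalso; rw [← h] at h1; exact lt_irrefl _ h1
          · exact h
        · rcases h₂.eq_or_lt with h | h
          · exfalso; rw [h, ← hgab] at h1; exact lt_irrefl _ h1
          · exact h
      obtain ⟨ε, hε, hball⟩ := Metric.isOpen_iff.1 hopen (g c) ⟨c, hcio, rfl⟩
      have hmem : g c + ε / 2 ∈ g '' Ioo a b := by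
        apply hball
        rw [Metric.mem_ball, Real.dist_eq]
        rw [abs_of_pos (by linarith)]
        linarith
      obtain ⟨x, hx, hxe⟩ := hmem
      have : g x ≤ g c := hcmax (hsub hx)
      linarith [hxe]
    · push_neg at h1
      by_cases h2 : g c' < g a
      · have hcio : c' ∈ Ioo a b := by
          rcases hc' with ⟨h₁, h₂⟩
          constructor
          · rcases h₁.eq_or_lt with h | h
            · exfalso; rw [← h] at h2; exact lt_irrefl _ h2
            · exact h
          · rcases h₂.eq_or_lt with h | h
            · exfalso; rw [h, ← hgab] at h2; exact lt_irrefl _ h2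
            · exact h
        obtain ⟨ε, hε, hball⟩ := Metric.isOpen_iff.1 hopen (g c') ⟨c', hcio, rfl⟩
        have hmem : g c' - ε / 2 ∈ g '' Ioo a b := by
          apply hball
          rw [Metric.mem_ball, Real.dist_eq]
          rw [abs_of_neg (by linarith)]
          linarith
        obtain ⟨x, hx, hxe⟩ := hmem
        have : g c' ≤ g x := hcmin (hsub hx)
        linarith [hxe]
      · push_neg at h2
        -- g is constant (= g a) on Icc a b
        have hconst : ∀ x ∈ Icc a b, g x = g a := by
          intro x hx
          have h3 : g x ≤ g c := hcmax hx
          have h4 : g c' ≤ g x := hcmin hx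
          have h5 : g a ≤ g c' := h2
          linarith
        have hmid : (a + b) / 2 ∈ Ioo a b := ⟨by linarith, by linarith⟩
        obtain ⟨ε, hε, hball⟩ := Metric.isOpen_iff.1 hopen (g ((a+b)/2))
          ⟨(a+b)/2, hmid, rfl⟩
        have hmem : g ((a+b)/2) + ε / 2 ∈ g '' Ioo a b := by
          apply hball
          rw [Metric.mem_ball, Real.dist_eq]
          rw [abs_of_pos (by linarith)]
          linarith
        obtain ⟨x, hx, hxe⟩ := hmem
        have e1 : g x = g a := hconst x (hsub hx)
        have e2 : g ((a+b)/2) = g a := hconst _ (hsub hmid)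
        rw [e1, e2] at hxe
        linarith
  intro a b hab
  rcases lt_trichotomy a b with h | h | h
  · exact absurd hab (fun hh => key a b h hh)
  · exact h
  · exact absurd hab.symm (fun hh => key b a h hh)

/-- integer step lemma -/
lemma aux_step_int {f : ℝ → ℝ} {c : ℝ} (hf : ∀ x, f (x + 1) = f x + c) :
    ∀ (k : ℤ) (x : ℝ), f (x + k) = f x + k * c := by
  intro k
  induction k using Int.induction_on with
  | zero => simp
  | succ n ih =>
    intro x
    have h2 : (x + ((n : ℤ) + 1 : ℤ) : ℝ) = (x + ((n : ℤ) : ℝ)) + 1 := by push_cast; ring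
    rw [h2, hf, ih]; push_cast; ring
  | pred n ih =>
    intro x
    have h1 : f ((x + (-n - 1 : ℤ)) + 1) = f (x + (-n - 1 : ℤ)) + c := hf _
    have h2 : ((x + (-n - 1 : ℤ)) + 1 : ℝ) = x + (-n : ℤ) := by push_cast; ring
    rw [h2, ih] at h1
    have : f (x + (-n - 1 : ℤ)) = f x + (-n : ℤ) * c - c := by linarith
    rw [this]; push_cast; ring



lemma aux_step_int' {f : ℝ → ℝ} {c : ℝ} (hf : ∀ x, f (x + 1) = f x + c) :
    ∀ (k : ℤ) (x : ℝ), f (x + k) = f x + k * c := by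
  intro k
  induction k using Int.induction_on with
  | zero => simp
  | succ n ih =>
    intro x
    have h2 : (x + ((n : ℤ) + 1 : ℤ) : ℝ) = (x + ((n : ℤ) : ℝ)) + 1 := by push_cast; ring
    rw [h2, hf, ih]; push_cast; ring
  | pred n ih =>
    intro x
    have h1 : f ((x + (-n - 1 : ℤ)) + 1) = f (x + (-n - 1 : ℤ)) + c := hf _
    have h2 : ((x + (-n - 1 : ℤ)) + 1 : ℝ) = x + (-n : ℤ) := by push_cast; ring
    rw [h2, ih] at h1
    have h3 : f (x + (-n - 1 : ℤ)) = f x + (-n : ℤ) * c - c := by linarith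
    rw [h3]; push_cast; ring

lemma aux_H (g : ℝ → ℝ) (hg : Continuous g) (d : ℤ)
    (hd2 : (2:ℝ) ≤ |(d:ℝ)|)
    (hdeg : ∀ t : ℝ, g (t + 1) = g t + d)
    (hcase : (Monotone g ∧ (0:ℝ) < (d:ℝ)) ∨ (Antitone g ∧ (d:ℝ) < 0)) :
    ∃ H : ℝ → ℝ, Continuous H ∧ Monotone H ∧ (∀ x, H (x + 1) = H x + 1) ∧
      (∀ x, H (g x) = d * H x) := by
  have hd0 : (d:ℝ) ≠ 0 := by
    intro h; rw [h] at hd2; simp at hd2; linarith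
  -- the periodic error function
  set e : ℝ → ℝ := fun x => g x - d * x with he
  have hecont : Continuous e := hg.sub (continuous_const.mul continuous_id)
  have heper : Function.Periodic e 1 := by
    intro x; simp only [he]; rw [hdeg x]; ring
  -- bound on e
  obtain ⟨C₀, hC₀⟩ := isCompact_Icc.exists_bound_of_continuousOn
    (f := e) (hecont.continuousOn (s := Icc (0:ℝ) 1))
  set C : ℝ := max C₀ 0 with hCdef
  have hC0 : 0 ≤ C := le_max_right _ _
  have hCb : ∀ x : ℝ, |e x| ≤ C := by
    intro x
    have hfr : e x = e (Int.fract x) := by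
      have h1 := (heper.int_mul ⌊x⌋) (Int.fract x)
      have h2 : Int.fract x + (⌊x⌋ : ℝ) * 1 = x := by
        rw [mul_one]; exact Int.fract_add_floor x
      rw [h2] at h1
      exact h1
    rw [hfr]
    have hmem : Int.fract x ∈ Icc (0:ℝ) 1 :=
      ⟨Int.fract_nonneg x, (Int.fract_lt_one x).le⟩
    calc |e (Int.fract x)| = ‖e (Int.fract x)‖ := (Real.norm_eq_abs _).symm
      _ ≤ C₀ := hC₀ _ hmem
      _ ≤ C := le_max_left _ _
  -- the series terms
  set F : ℕ → ℝ → ℝ := fun n x => e (g^[n] x) / (d:ℝ)^(n+1) with hF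
  have hFcont : ∀ n, Continuous (F n) :=
    fun n => (hecont.comp (hg.iterate n)).div_const _
  set u : ℕ → ℝ := fun n => C * (1/2:ℝ)^(n+1) with hu
  have hFb : ∀ n x, |F n x| ≤ u n := by
    intro n x
    have h1 : |F n x| = |e (g^[n] x)| / |(d:ℝ)|^(n+1) := by
      rw [hF]; simp [abs_div, abs_pow]
    rw [h1]
    have h2 : (2:ℝ)^(n+1) ≤ |(d:ℝ)|^(n+1) := pow_le_pow_left₀ (by norm_num) hd2 _
    have h3 : |e (g^[n] x)| / |(d:ℝ)|^(n+1) ≤ C / (2:ℝ)^(n+1) :=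
      div_le_div₀ hC0 (hCb _) (by positivity) h2
    refine h3.trans (le_of_eq ?_)
    show C / 2 ^ (n+1) = C * (1/2:ℝ) ^ (n+1)
    rw [div_pow, one_pow, mul_one_div]
  have husum : Summable u := by
    have h1 : Summable (fun n : ℕ => (1/2:ℝ)^n) :=
      summable_geometric_of_lt_one (by norm_num) (by norm_num)
    refine (h1.mul_left (C * (1/2))).congr fun n => ?_
    rw [hu]; simp only [pow_succ]; ring
  have hFs : ∀ x, Summable (fun n => F n x) := by
    intro x
    refine Summable.of_abs ?_
    exact Summable.of_nonneg_of_le (fun n => abs_nonneg _) (fun n => hFb n x) husum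
  -- the semiconjugacy H
  set H : ℝ → ℝ := fun x => x + ∑' n, F n x with hH
  have hHcont : Continuous H := by
    refine continuous_id.add (continuous_tsum hFcont husum ?_)
    intro n x; rw [Real.norm_eq_abs]; exact hFb n x
  -- partial sums are the iterates
  set M : ℕ → ℝ → ℝ := fun n x => g^[n] x / (d:ℝ)^n with hM
  have hMsucc : ∀ n x, M (n+1) x = M n x + F n x := by
    intro n x
    have hit : g^[n+1] x = g (g^[n] x) := Function.iterate_succ_apply' g n x
    simp only [hM, hF, hit, he, pow_succ]
    field_simp
    ring
  have hps : ∀ x n, M n x = x + ∑ k ∈ Finset.range n, F k x := by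
    intro x n
    induction n with
    | zero => simp [hM]
    | succ n ih => rw [hMsucc, ih, Finset.sum_range_succ]; ring
  have hHtend : ∀ x, Tendsto (fun n => M n x) atTop (𝓝 (H x)) := by
    intro x
    have h1 := (hFs x).hasSum.tendsto_sum_nat
    have h2 := Filter.Tendsto.add (tendsto_const_nhds : Tendsto (fun _ : ℕ => x) atTop (𝓝 x)) h1
    exact h2.congr fun n => (hps x n).symm
  -- monotonicity
  have hMmono : ∀ n, Monotone (M n) := by
    intro n
    induction n with
    | zero => intro a b hab; simpa [hM] using hab
    | succ n ih =>
      intro a b hab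
      have hform : ∀ y, M (n+1) y = M n (g y) / d := by
        intro y
        simp only [hM, Function.iterate_succ_apply, pow_succ]
        rw [div_div]
      rw [hform a, hform b]
      rcases hcase with ⟨hmono, hdpos⟩ | ⟨hanti, hdneg⟩
      · exact (div_le_div_iff_of_pos_right hdpos).2 (ih (hmono hab))
      · exact (div_le_div_right_of_neg hdneg).2 (ih (hanti hab))
  have hHmono : Monotone H := by
    intro a b hab
    exact le_of_tendsto_of_tendsto (hHtend a) (hHtend b)
      (Filter.Eventually.of_forall fun n => hMmono n hab)
  -- H(x+1) = H x + 1
  have hgZ : ∀ (k : ℤ) (x : ℝ), g (x + k) = g x + k * d := aux_step_int' hdeg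
  have hgit : ∀ (n : ℕ) (x : ℝ), g^[n] (x + 1) = g^[n] x + ((d^n : ℤ) : ℝ) := by
    intro n
    induction n with
    | zero => simp
    | succ n ih =>
      intro x
      rw [Function.iterate_succ_apply', Function.iterate_succ_apply', ih, hgZ]
      push_cast
      ring
  have hFper : ∀ n x, F n (x + 1) = F n x := by
    intro n x
    have h1 := (heper.int_mul (d^n)) (g^[n] x)
    rw [mul_one] at h1
    simp only [hF, hgit n x, h1]
  have hH1 : ∀ x, H (x + 1) = H x + 1 := by
    intro x
    simp only [hH]
    rw [tsum_congr (fun n => hFper n x)]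
    ring
  -- H(g x) = d * H x
  have hHg : ∀ x, H (g x) = d * H x := by
    intro x
    have hsum2 : Summable (fun n => (d:ℝ) * F n x) := (hFs x).mul_left _
    have hzero : ∑' n, (d:ℝ) * F n x = (d:ℝ) * F 0 x + ∑' n, (d:ℝ) * F (n+1) x :=
      Summable.tsum_eq_zero_add hsum2
    have hF0 : (d:ℝ) * F 0 x = e x := by
      simp only [hF, Function.iterate_zero_apply, pow_one]
      field_simp
      ring
    have hFsh : ∀ n, (d:ℝ) * F (n+1) x = F n (g x) := by
      intro n
      simp only [hF, Function.iterate_succ_apply, pow_succ]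
      field_simp
    calc H (g x) = g x + ∑' n, F n (g x) := rfl
      _ = (d:ℝ) * x + e x + ∑' n, (d:ℝ) * F (n+1) x := by
          rw [tsum_congr (fun n => (hFsh n).symm)]
          simp only [he]; ring
      _ = (d:ℝ) * x + ((d:ℝ) * F 0 x + ∑' n, (d:ℝ) * F (n+1) x) := by rw [hF0]; ring
      _ = (d:ℝ) * x + ∑' n, (d:ℝ) * F n x := by rw [← hzero]
      _ = (d:ℝ) * x + (d:ℝ) * ∑' n, F n x := by rw [tsum_mul_left]
      _ = d * H x := by simp only [hH]; ring
  exact ⟨H, hHcont, hHmono, hH1, hHg⟩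

open Set Function Filter Topology

theorem stmt9 (φ : AddCircle (1 : ℝ) → AddCircle (1 : ℝ))
    (hloc : IsLocalHomeomorph φ)
    (d : ℤ) (hd : 2 ≤ |d|)
    (g : ℝ → ℝ) (hg : Continuous g)
    (hlift : ∀ t : ℝ, φ (↑t : AddCircle (1 : ℝ)) = ((g t : ℝ) : AddCircle (1 : ℝ)))
    (hdeg : ∀ t : ℝ, g (t + 1) = g t + d)
    (hst : StronglyTransitive φ) :
    ∃ h : AddCircle (1 : ℝ) ≃ₜ AddCircle (1 : ℝ),
      ∀ x : AddCircle (1 : ℝ), h (φ x) = d • h x := by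
  haveI : Fact ((0:ℝ) < 1) := ⟨one_pos⟩
  have hd2 : (2:ℝ) ≤ |(d:ℝ)| := by
    have : ((2:ℤ):ℝ) ≤ ((|d|:ℤ):ℝ) := Int.cast_le.mpr hd
    simpa [Int.cast_abs] using this
  have hd0 : (d:ℝ) ≠ 0 := by
    intro h; rw [h] at hd2; simp at hd2; linarith
  -- g is a local homeomorphism, hence an open map
  have hploc : IsLocalHomeomorph ((↑) : ℝ → AddCircle (1:ℝ)) :=
    AddCircle.isLocalHomeomorph_coe 1
  have hpg : IsLocalHomeomorph (((↑) : ℝ → AddCircle (1:ℝ)) ∘ g) := by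
    have hcompeq : (((↑) : ℝ → AddCircle (1:ℝ)) ∘ g) = φ ∘ ((↑) : ℝ → AddCircle (1:ℝ)) :=
      funext fun t => (hlift t).symm
    rw [hcompeq]
    exact hloc.comp hploc
  have hgloc : IsLocalHomeomorph g := IsLocalHomeomorph.of_comp hpg hploc hg
  have hginj : Function.Injective g := aux_inj_of_open hg hgloc.isOpenMap
  -- monotonicity dichotomy
  have hcase : (Monotone g ∧ (0:ℝ) < (d:ℝ)) ∨ (Antitone g ∧ (d:ℝ) < 0) := by
    rcases hg.strictMono_of_inj hginj with hm | ha
    · left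
      refine ⟨hm.monotone, ?_⟩
      have h01 : g 0 < g 1 := hm one_pos
      have := hdeg 0
      rw [zero_add] at this
      rw [this] at h01
      linarith
    · right
      refine ⟨ha.antitone, ?_⟩
      have h01 : g 1 < g 0 := ha one_pos
      have := hdeg 0
      rw [zero_add] at this
      rw [this] at h01
      linarith
  -- the semiconjugacy
  obtain ⟨H, hHcont, hHmono, hH1, hHg⟩ := aux_H g hg d hd2 hdeg hcase
  have hHZ : ∀ (k : ℤ) (x : ℝ), H (x + k) = H x + k := by
    intro k x
    have := aux_step_int' hH1 k x
    rwa [mul_one] at this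
  -- descend to the circle
  have hwper : Function.Periodic (fun x : ℝ => ((H x : ℝ) : AddCircle (1:ℝ))) 1 := by
    intro x
    simp only [hH1 x]
    exact AddCircle.coe_add_period 1 (H x)
  set h : AddCircle (1:ℝ) → AddCircle (1:ℝ) := hwper.lift with hhdef
  have hcoe : ∀ x : ℝ, h ↑x = ((H x : ℝ) : AddCircle (1:ℝ)) := fun x => rfl
  have hcont : Continuous h := by
    exact Continuous.quotient_liftOn' ((AddCircle.continuous_mk' 1).comp hHcont) _
  -- the coercion is an AddMonoidHom, for zsmul manipulation
  have hzsmul : ∀ (r : ℝ), ((d • r : ℝ) : AddCircle (1:ℝ)) = d • ((r : ℝ) : AddCircle (1:ℝ)) :=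
    fun r => map_zsmul (QuotientAddGroup.mk' (AddSubgroup.zmultiples (1:ℝ))) d r
  -- equivariance
  have hequi : ∀ x : AddCircle (1:ℝ), h (φ x) = d • h x := by
    intro x
    induction x using QuotientAddGroup.induction_on with
    | H t =>
      rw [hlift t, hcoe, hcoe, hHg t, show (d:ℝ) * H t = d • H t from (zsmul_eq_mul _ _).symm,
        hzsmul]
  -- surjectivity
  have hsurj : Function.Surjective h := by
    intro z
    induction z using QuotientAddGroup.induction_on with
    | H r =>
      have ha : H (0 + (⌊r - H 0⌋ : ℝ)) = H 0 + ⌊r - H 0⌋ := hHZ _ 0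
      have hb : H (0 + (⌈r - H 0⌉ : ℝ)) = H 0 + ⌈r - H 0⌉ := hHZ _ 0
      rw [zero_add] at ha hb
      have hab : ((⌊r - H 0⌋ : ℤ) : ℝ) ≤ ((⌈r - H 0⌉ : ℤ) : ℝ) := by
        exact_mod_cast Int.floor_le_ceil _
      have hmem : r ∈ Icc (H ((⌊r - H 0⌋ : ℤ) : ℝ)) (H ((⌈r - H 0⌉ : ℤ) : ℝ)) := by
        rw [ha, hb]
        constructor
        · linarith [Int.floor_le (r - H 0)]
        · linarith [Int.le_ceil (r - H 0)]
      have := intermediate_value_Icc hab hHcont.continuousOn hmem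
      obtain ⟨x, _, hx⟩ := this
      exact ⟨↑x, by rw [hcoe, hx]⟩
  -- H is not constant on any non-trivial interval (via strong transitivity)
  have hne : ∀ u v : ℝ, u < v → H u ≠ H v := by
    intro u v huv heq
    -- v - u < 1
    have hlt1 : v - u < 1 := by
      by_contra hge
      push_neg at hge
      have h1 : u + 1 ≤ v := by linarith
      have h2 : H (u + 1) ≤ H v := hHmono h1
      rw [hH1 u] at h2
      rw [← heq] at h2
      linarith
    have hconst : ∀ w ∈ Icc u v, H w = H u := by
      intro w hw
      refine le_antisymm ?_ (hHmono hw.1)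
      rw [heq]
      exact hHmono hw.2
    set V : Set (AddCircle (1:ℝ)) := ((↑) : ℝ → AddCircle (1:ℝ)) '' Ioo u v with hV
    have hVopen : IsOpen V := QuotientAddGroup.isOpenMap_coe _ isOpen_Ioo
    have hVne : V.Nonempty :=
      ⟨_, ⟨(u + v)/2, ⟨by linarith, by linarith⟩, rfl⟩⟩
    obtain ⟨N, hN⟩ := hst V hVopen hVne
    set z0 : AddCircle (1:ℝ) := ((H u : ℝ) : AddCircle (1:ℝ)) with hz0
    have hiter : ∀ (i : ℕ) (x : AddCircle (1:ℝ)), h (φ^[i] x) = d^i • h x := by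
      intro i
      induction i with
      | zero => intro x; simp
      | succ i ih =>
        intro x
        rw [Function.iterate_succ_apply', hequi, ih, smul_smul, ← pow_succ']
    have hrange : ∀ q : AddCircle (1:ℝ), h q ∈ (fun i : ℕ => (d^i : ℤ) • z0) '' (Iic N) := by
      intro q
      have hq : q ∈ ⋃ i ∈ Finset.range (N + 1), φ^[i] '' V := by rw [hN]; trivial
      simp only [Set.mem_iUnion] at hq
      obtain ⟨i, hi, ξ, hξV, hq⟩ := hq
      obtain ⟨w, hw, rfl⟩ := hξV
      rw [← hq, hiter i, hcoe, hconst w (Ioo_subset_Icc_self hw)]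
      exact ⟨i, by simpa using Nat.lt_succ_iff.mp (Finset.mem_range.mp hi), rfl⟩
    have hfin : (Set.univ : Set (AddCircle (1:ℝ))).Finite := by
      have hsub : (Set.univ : Set (AddCircle (1:ℝ))) ⊆ (fun i : ℕ => (d^i : ℤ) • z0) '' (Iic N) := by
        intro q _
        obtain ⟨q', rfl⟩ := hsurj q
        exact hrange q'
      exact Set.Finite.subset ((Set.finite_Iic N).image _) hsub
    haveI : Infinite (AddCircle (1:ℝ)) := by
      haveI : Infinite (Set.Ico (0:ℝ) (0+1)) := Set.Ico.infinite (by norm_num)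
      exact Infinite.of_injective (AddCircle.equivIco 1 0).symm
        (AddCircle.equivIco 1 0).symm.injective
    exact Set.infinite_univ hfin
  -- injectivity
  have hinj : Function.Injective h := by
    intro a b hab
    induction a using QuotientAddGroup.induction_on with
    | H x =>
    induction b using QuotientAddGroup.induction_on with
    | H y =>
      rw [hcoe, hcoe] at hab
      obtain ⟨m, hm⟩ := QuotientAddGroup.eq.mp hab
      -- hm : m • 1 = -H x + H y
      have hm' : H y = H x + (m : ℝ) := by
        have : (m : ℝ) * 1 = -H x + H y := by
          rw [← zsmul_eq_mul]; exact hm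
        rw [mul_one] at this
        linarith
      have hHxm : H (x + (m : ℝ)) = H y := by rw [hHZ m x, hm']
      have hxy : x + (m : ℝ) = y := by
        rcases lt_trichotomy (x + (m : ℝ)) y with hlt | heqq | hgt
        · exact absurd hHxm (hne _ _ hlt)
        · exact heqq
        · exact absurd hHxm.symm (hne _ _ hgt)
      apply QuotientAddGroup.eq.mpr
      refine ⟨m, ?_⟩
      show m • (1:ℝ) = -x + y
      rw [zsmul_eq_mul, mul_one]
      linarith [hxy]
  -- assemble the homeomorphism
  let E : AddCircle (1:ℝ) ≃ AddCircle (1:ℝ) := Equiv.ofBijective h ⟨hinj, hsurj⟩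
  exact ⟨Continuous.homeoOfEquivCompactToT2 (f := E) hcont, fun x => hequi x⟩
end

section
/- Let n ≥ 1 and let μ : M_n(ℤ) → ℤ be a map such that μ(AB) = μ(A)μ(B) for all A, B ∈ M_n(ℤ) and μ(D) = det D for every diagonal matrix D ∈ M_n(ℤ). Then μ(A) = det A for all A ∈ M_n(ℤ). -/
open Matrix

section Aux

variable {n : ℕ}

private lemma comm_aux (i j : Fin n) (hij : i ≠ j) (k t p : ℤ) :
    (k • (1 : Matrix (Fin n) (Fin n) ℤ) + single i j p) *
      diagonal (fun l => if l = j then t else 1)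
    = diagonal (fun l => if l = j then t else 1) *
      (k • (1 : Matrix (Fin n) (Fin n) ℤ) + single i j (t * p)) := by
  ext a b
  rw [mul_diagonal, diagonal_mul]
  simp only [Matrix.add_apply, Matrix.smul_apply, Matrix.one_apply, Matrix.single,
    Matrix.of_apply, smul_eq_mul]
  split_ifs <;> (try ring) <;> (exfalso; apply hij; aesop)

private lemma det_daux (j : Fin n) (t : ℤ) :
    (diagonal (fun l : Fin n => if l = j then t else 1)).det = t := by
  rw [det_diagonal]
  simp

private lemma exists_int_smul (B : Matrix (Fin n) (Fin n) ℚ) :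
    ∃ (k : ℤ) (C : Matrix (Fin n) (Fin n) ℤ), k ≠ 0 ∧ C.map (Int.cast) = (k : ℚ) • B := by
  set k : ℤ := ∏ p : Fin n × Fin n, ((B p.1 p.2).den : ℤ) with hk
  have hk0 : k ≠ 0 := Finset.prod_ne_zero_iff.2 fun p _ => by
    exact_mod_cast (B p.1 p.2).den_ne_zero
  refine ⟨k, Matrix.of fun i j => (k / ((B i j).den : ℤ)) * (B i j).num, hk0, ?_⟩
  ext i j
  have hdvd : ((B i j).den : ℤ) ∣ k := by
    simpa using Finset.dvd_prod_of_mem (fun p : Fin n × Fin n => ((B p.1 p.2).den : ℤ))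
      (Finset.mem_univ (i, j))
  have h1 : (k / ((B i j).den : ℤ)) * ((B i j).den : ℤ) = k := Int.ediv_mul_cancel hdvd
  have h2 : ((B i j).den : ℚ) * B i j = (B i j).num := by
    rw [mul_comm]
    exact ((div_eq_iff (by positivity)).1 (Rat.num_div_den (B i j))).symm
  simp only [Matrix.map_apply, Matrix.smul_apply, Matrix.of_apply, smul_eq_mul]
  calc ((((k / ((B i j).den : ℤ)) * (B i j).num : ℤ)) : ℚ)
      = ((k / ((B i j).den : ℤ) : ℤ) : ℚ) * ((B i j).num : ℚ) := by push_cast; ring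
    _ = ((k / ((B i j).den : ℤ) : ℤ) : ℚ) * (((B i j).den : ℚ) * B i j) := by rw [h2]
    _ = (((k / ((B i j).den : ℤ)) * ((B i j).den : ℤ) : ℤ) : ℚ) * B i j := by push_cast; ring
    _ = (k : ℚ) * B i j := by rw [h1]

variable (μ : Matrix (Fin n) (Fin n) ℤ → ℤ)
    (hmul : ∀ A B : Matrix (Fin n) (Fin n) ℤ, μ (A * B) = μ A * μ B)
    (hdiag : ∀ d : Fin n → ℤ, μ (Matrix.diagonal d) = (Matrix.diagonal d).det)

include hmul hdiag

private lemma mu_one : μ 1 = 1 := by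
  have := hdiag 1
  simpa using this

private lemma mu_smul_one (k : ℤ) : μ (k • (1 : Matrix (Fin n) (Fin n) ℤ)) = k ^ n := by
  have h : (k • (1 : Matrix (Fin n) (Fin n) ℤ)) = diagonal (fun _ => k) := by
    ext a b
    simp [Matrix.one_apply, Matrix.diagonal_apply]
  rw [h, hdiag, det_diagonal]
  simp

private lemma mu_transvection (i j : Fin n) (hij : i ≠ j) (p : ℤ) :
    μ (transvection i j p) = 1 := by
  have hu : μ (transvection i j p) * μ (transvection i j (-p)) = 1 := by
    rw [← hmul, transvection_mul_transvection_same _ _ hij]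
    simpa using mu_one μ hmul hdiag
  have hne : μ (transvection i j p) ≠ 0 := left_ne_zero_of_mul_eq_one hu
  have key : μ (transvection i j p) = μ (transvection i j (2 * p)) := by
    have hc := comm_aux i j hij 1 2 p
    simp only [one_smul] at hc
    have : μ (transvection i j p * diagonal (fun l => if l = j then 2 else 1))
        = μ (diagonal (fun l => if l = j then 2 else 1) * transvection i j (2 * p)) := by
      rw [show (transvection i j p : Matrix (Fin n) (Fin n) ℤ) = 1 + single i j p from rfl,
        show (transvection i j (2 * p) : Matrix (Fin n) (Fin n) ℤ)
          = 1 + single i j (2 * p) from rfl, hc]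
    rw [hmul, hmul, hdiag, det_daux] at this
    have h2 : μ (transvection i j p) * 2 = μ (transvection i j (2 * p)) * 2 := by linarith
    exact mul_right_cancel₀ two_ne_zero h2
  have hsq : μ (transvection i j (2 * p)) = μ (transvection i j p) * μ (transvection i j p) := by
    rw [← hmul, transvection_mul_transvection_same _ _ hij, two_mul]
  have h3 : μ (transvection i j p) = μ (transvection i j p) * μ (transvection i j p) :=
    key.trans hsq
  have h4 : μ (transvection i j p) * 1 = μ (transvection i j p) * μ (transvection i j p) := by
    rw [mul_one]; exact h3
  exact (mul_left_cancel₀ hne h4).symm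

private lemma mu_core (i j : Fin n) (hij : i ≠ j) (k p : ℤ) (hk : k ≠ 0) :
    μ (k • (1 : Matrix (Fin n) (Fin n) ℤ) + single i j p) = k ^ n := by
  have hc := comm_aux i j hij k k p
  have hdecomp : (k • (1 : Matrix (Fin n) (Fin n) ℤ) + single i j (k * p))
      = (k • (1 : Matrix (Fin n) (Fin n) ℤ)) * transvection i j p := by
    rw [smul_mul_assoc, one_mul]
    rw [show (transvection i j p : Matrix (Fin n) (Fin n) ℤ) = 1 + single i j p from rfl]
    rw [smul_add, smul_single]
    simp
  have h1 : μ ((k • (1 : Matrix (Fin n) (Fin n) ℤ) + single i j p) *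
      diagonal (fun l => if l = j then k else 1))
      = μ (diagonal (fun l => if l = j then k else 1) *
        (k • (1 : Matrix (Fin n) (Fin n) ℤ) + single i j (k * p))) := by rw [hc]
  rw [hmul, hmul, hdiag, det_daux, hdecomp, hmul, mu_smul_one μ hmul hdiag,
    mu_transvection μ hmul hdiag i j hij] at h1
  have : μ (k • (1 : Matrix (Fin n) (Fin n) ℤ) + single i j p) * k
      = k * (k ^ n * 1) := h1
  rw [mul_one] at this
  have := mul_right_cancel₀ hk (by linarith [this] :
    μ (k • (1 : Matrix (Fin n) (Fin n) ℤ) + single i j p) * k = k ^ n * k)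
  exact this

end Aux

theorem stmt10 {n : ℕ} (hn : 1 ≤ n) (μ : Matrix (Fin n) (Fin n) ℤ → ℤ)
    (hmul : ∀ A B : Matrix (Fin n) (Fin n) ℤ, μ (A * B) = μ A * μ B)
    (hdiag : ∀ d : Fin n → ℤ, μ (Matrix.diagonal d) = (Matrix.diagonal d).det) :
    ∀ A : Matrix (Fin n) (Fin n) ℤ, μ A = A.det := by
  intro A
  set P : Matrix (Fin n) (Fin n) ℚ → Prop := fun B =>
    ∃ (k : ℤ) (C : Matrix (Fin n) (Fin n) ℤ), k ≠ 0 ∧ C.map (Int.cast) = (k : ℚ) • B ∧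
      ((μ C : ℤ) : ℚ) = (k : ℚ) ^ n * B.det with hP
  have main : P (A.map (Int.cast)) := by
    apply diagonal_transvection_induction P (A.map (Int.cast))
    · -- diagonal case
      intro d _
      obtain ⟨k, C, hk0, hC⟩ := exists_int_smul (diagonal d)
      refine ⟨k, C, hk0, hC, ?_⟩
      have hCd : C = diagonal (fun i => C i i) := by
        ext a b
        by_cases hab : a = b
        · subst hab; simp
        · have : ((C a b : ℤ) : ℚ) = 0 := by
            have := congrFun (congrFun hC a) b
            simp only [Matrix.map_apply, Matrix.smul_apply, smul_eq_mul] at this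
            rw [this, diagonal_apply_ne _ hab, mul_zero]
          rw [diagonal_apply_ne _ hab]
          exact_mod_cast this
      have h1 : μ C = C.det := by rw [hCd, hdiag, ← hCd]
      rw [h1]
      have h2 : ((C.det : ℤ) : ℚ) = (C.map (Int.cast)).det := by
        simpa using (RingHom.map_det (Int.castRingHom ℚ) C)
      rw [h2, hC, det_smul]
      simp
    · -- transvection case
      rintro ⟨i, j, hij, c⟩
      rw [TransvectionStruct.toMatrix_mk]
      obtain ⟨k, C, hk0, hC⟩ := exists_int_smul (transvection i j c)
      refine ⟨k, C, hk0, hC, ?_⟩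
      have hCform : C = k • (1 : Matrix (Fin n) (Fin n) ℤ) + single i j (C i j) := by
        ext a b
        have hC' := congrFun (congrFun hC a) b
        simp only [Matrix.map_apply, Matrix.smul_apply, smul_eq_mul] at hC'
        have hCij := congrFun (congrFun hC i) j
        simp only [Matrix.map_apply, Matrix.smul_apply, smul_eq_mul] at hCij
        have hval : ((C i j : ℤ) : ℚ) = (k : ℚ) * c := by
          rw [hCij]
          simp [transvection, Matrix.one_apply, hij, Matrix.single]
        apply (Int.cast_injective (α := ℚ))
        rw [hC']
        simp only [transvection, Matrix.add_apply, Matrix.smul_apply, Matrix.one_apply,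
          Matrix.single, Matrix.of_apply, smul_eq_mul, Int.cast_add, Int.cast_mul,
          Int.cast_one, Int.cast_zero, apply_ite (fun x : ℤ => (x : ℚ))]
        rw [hval]
        split_ifs <;> (try ring) <;> (exfalso; apply hij; aesop)
      rw [hCform, mu_core μ hmul hdiag i j hij k (C i j) hk0,
        det_transvection_of_ne _ _ hij]
      push_cast
      ring
    · -- multiplication case
      rintro B1 B2 ⟨k1, C1, hk1, hm1, hv1⟩ ⟨k2, C2, hk2, hm2, hv2⟩
      refine ⟨k1 * k2, C1 * C2, mul_ne_zero hk1 hk2, ?_, ?_⟩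
      · have hmm : (C1 * C2).map (Int.cast : ℤ → ℚ)
            = (C1.map Int.cast) * (C2.map Int.cast) := by
          simpa using Matrix.map_mul (L := C1) (M := C2) (f := Int.castRingHom ℚ)
        rw [hmm, hm1, hm2, smul_mul_smul_comm, Int.cast_mul]
      · rw [hmul, det_mul]
        push_cast
        rw [hv1, hv2]
        ring
  obtain ⟨k, C, hk0, hm, hv⟩ := main
  have hCkA : C = k • A := by
    have heq : C.map (Int.cast : ℤ → ℚ) = (k • A).map (Int.cast : ℤ → ℚ) := by
      rw [hm]
      ext a b
      simp only [Matrix.map_apply, Matrix.smul_apply, smul_eq_mul, Int.cast_mul]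
    exact Matrix.map_injective (Int.cast_injective (α := ℚ)) heq
  have hdetmap : ((A.det : ℤ) : ℚ) = (A.map (Int.cast)).det := by
    simpa using (RingHom.map_det (Int.castRingHom ℚ) A)
  have hsm : (k • A : Matrix (Fin n) (Fin n) ℤ) = (k • (1 : Matrix (Fin n) (Fin n) ℤ)) * A := by
    rw [smul_mul_assoc, one_mul]
  have hμC : μ C = k ^ n * μ A := by
    rw [hCkA, hsm, hmul, mu_smul_one μ hmul hdiag]
  have hfin : ((k ^ n * μ A : ℤ) : ℚ) = (k : ℚ) ^ n * ((A.det : ℤ) : ℚ) := by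
    rw [← hμC, hv, ← hdetmap]
  push_cast at hfin
  have hkn : ((k : ℚ)) ^ n ≠ 0 := pow_ne_zero _ (by exact_mod_cast hk0)
  have : ((μ A : ℤ) : ℚ) = ((A.det : ℤ) : ℚ) := mul_left_cancel₀ hkn (hfin.trans (by rw [hdetmap]))
  exact_mod_cast this
end

section
/- Let μ : M₂(ℤ) → M₂(ℤ) be a map such that μ(AB) = μ(A)μ(B) for all A, B ∈ M₂(ℤ) and μ(D) = D for every diagonal matrix D ∈ M₂(ℤ). Then either μ(A) = A for all A ∈ M₂(ℤ), or μ(A) = WAW for all A ∈ M₂(ℤ), where W is the diagonal matrix with diagonal entries (−1, 1). -/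
open Matrix

theorem stmt12 (μ : Matrix (Fin 2) (Fin 2) ℤ → Matrix (Fin 2) (Fin 2) ℤ)
    (hmul : ∀ A B : Matrix (Fin 2) (Fin 2) ℤ, μ (A * B) = μ A * μ B)
    (hdiag : ∀ d : Fin 2 → ℤ, μ (Matrix.diagonal d) = Matrix.diagonal d) :
    (∀ A : Matrix (Fin 2) (Fin 2) ℤ, μ A = A) ∨
      (∀ A : Matrix (Fin 2) (Fin 2) ℤ,
        μ A = Matrix.diagonal ![(-1 : ℤ), 1] * A * Matrix.diagonal ![(-1 : ℤ), 1]) := by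
  have hE11 : Matrix.diagonal ![(1:ℤ),0] = !![1,0;0,0] := by
    ext i j; fin_cases i <;> fin_cases j <;> simp
  have hE22 : Matrix.diagonal ![(0:ℤ),1] = !![0,0;0,1] := by
    ext i j; fin_cases i <;> fin_cases j <;> simp
  have h11 : μ !![1,0;0,0] = !![1,0;0,0] := by rw [← hE11]; exact hdiag _
  have h22 : μ !![0,0;0,1] = !![0,0;0,1] := by rw [← hE22]; exact hdiag _
  -- μ(E12) = ε • E12
  set B := μ !![0,1;0,0] with hB
  have hB' : B = !![1,0;0,0] * B * !![0,0;0,1] := by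
    have : (!![1,0;0,0] : Matrix (Fin 2) (Fin 2) ℤ) * !![0,1;0,0] * !![0,0;0,1] = !![0,1;0,0] := by
      ext i j; fin_cases i <;> fin_cases j <;> simp [Matrix.mul_apply, Matrix.vecMul, Matrix.vecHead, Matrix.vecTail, dotProduct, Fin.sum_univ_two]
    calc B = μ (!![1,0;0,0] * !![0,1;0,0] * !![0,0;0,1]) := by rw [this]
    _ = !![1,0;0,0] * B * !![0,0;0,1] := by rw [hmul, hmul, h11, h22]
  set ε := B 0 1 with hε
  have hBval : B = !![0, ε; 0, 0] := by
    rw [hB']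
    ext i j; fin_cases i <;> fin_cases j <;>
      simp [Matrix.mul_apply, Matrix.vecMul, Matrix.vecHead, Matrix.vecTail, dotProduct, Fin.sum_univ_two, hε, hB'.symm]
  set C := μ !![0,0;1,0] with hC
  have hC' : C = !![0,0;0,1] * C * !![1,0;0,0] := by
    have : (!![0,0;0,1] : Matrix (Fin 2) (Fin 2) ℤ) * !![0,0;1,0] * !![1,0;0,0] = !![0,0;1,0] := by
      ext i j; fin_cases i <;> fin_cases j <;> simp [Matrix.mul_apply, Matrix.vecMul, Matrix.vecHead, Matrix.vecTail, dotProduct, Fin.sum_univ_two]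
    calc C = μ (!![0,0;0,1] * !![0,0;1,0] * !![1,0;0,0]) := by rw [this]
    _ = !![0,0;0,1] * C * !![1,0;0,0] := by rw [hmul, hmul, h11, h22]
  set δ := C 1 0 with hδ
  have hCval : C = !![0, 0; δ, 0] := by
    rw [hC']
    ext i j; fin_cases i <;> fin_cases j <;>
      simp [Matrix.mul_apply, Matrix.vecMul, Matrix.vecHead, Matrix.vecTail, dotProduct, Fin.sum_univ_two, hδ, hC'.symm]
  have hεδ : ε * δ = 1 := by
    have h : μ (!![0,1;0,0] * !![0,0;1,0]) = B * C := hmul _ _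
    have h2 : (!![0,1;0,0] : Matrix (Fin 2) (Fin 2) ℤ) * !![0,0;1,0] = !![1,0;0,0] := by
      ext i j; fin_cases i <;> fin_cases j <;> simp [Matrix.mul_apply, Matrix.vecMul, Matrix.vecHead, Matrix.vecTail, dotProduct, Fin.sum_univ_two]
    rw [h2, h11, hBval, hCval] at h
    have := congrFun (congrFun h 0) 0
    simpa [Matrix.mul_apply, Matrix.vecMul, Matrix.vecHead, Matrix.vecTail, dotProduct, Fin.sum_univ_two] using this.symm
  -- entry lemmas
  have e00 : ∀ A, μ A 0 0 = A 0 0 := by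
    intro A
    have h1 : (!![1,0;0,0] : Matrix (Fin 2) (Fin 2) ℤ) * A * !![1,0;0,0]
        = Matrix.diagonal ![A 0 0, 0] := by
      ext i j; fin_cases i <;> fin_cases j <;>
        simp [Matrix.mul_apply, Matrix.vecMul, Matrix.vecHead, Matrix.vecTail, dotProduct, Fin.sum_univ_two]
    have h2 : μ (!![1,0;0,0] * A * !![1,0;0,0]) = !![1,0;0,0] * μ A * !![1,0;0,0] := by
      rw [hmul, hmul, h11]
    rw [h1, hdiag] at h2
    have := congrFun (congrFun h2 0) 0
    simpa [Matrix.mul_apply, Matrix.vecMul, Matrix.vecHead, Matrix.vecTail, dotProduct, Fin.sum_univ_two] using this.symm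
  have e11 : ∀ A, μ A 1 1 = A 1 1 := by
    intro A
    have h1 : (!![0,0;0,1] : Matrix (Fin 2) (Fin 2) ℤ) * A * !![0,0;0,1]
        = Matrix.diagonal ![0, A 1 1] := by
      ext i j; fin_cases i <;> fin_cases j <;>
        simp [Matrix.mul_apply, Matrix.vecMul, Matrix.vecHead, Matrix.vecTail, dotProduct, Fin.sum_univ_two]
    have h2 : μ (!![0,0;0,1] * A * !![0,0;0,1]) = !![0,0;0,1] * μ A * !![0,0;0,1] := by
      rw [hmul, hmul, h22]
    rw [h1, hdiag] at h2
    have := congrFun (congrFun h2 1) 1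
    simpa [Matrix.mul_apply, Matrix.vecMul, Matrix.vecHead, Matrix.vecTail, dotProduct, Fin.sum_univ_two] using this.symm
  have e01 : ∀ A, μ A 0 1 = A 0 1 * ε := by
    intro A
    have h1 : (!![1,0;0,0] : Matrix (Fin 2) (Fin 2) ℤ) * A * !![0,0;0,1]
        = Matrix.diagonal ![A 0 1, 1] * !![0,1;0,0] := by
      ext i j; fin_cases i <;> fin_cases j <;>
        simp [Matrix.mul_apply, Matrix.vecMul, Matrix.vecHead, Matrix.vecTail, dotProduct, Fin.sum_univ_two]
    have h2 : μ (!![1,0;0,0] * A * !![0,0;0,1]) = !![1,0;0,0] * μ A * !![0,0;0,1] := by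
      rw [hmul, hmul, h11, h22]
    rw [h1, hmul, hdiag, ← hB, hBval] at h2
    have := congrFun (congrFun h2 0) 1
    simpa [Matrix.mul_apply, Matrix.vecMul, Matrix.vecHead, Matrix.vecTail, dotProduct, Fin.sum_univ_two] using this.symm
  have e10 : ∀ A, μ A 1 0 = A 1 0 * δ := by
    intro A
    have h1 : (!![0,0;0,1] : Matrix (Fin 2) (Fin 2) ℤ) * A * !![1,0;0,0]
        = Matrix.diagonal ![1, A 1 0] * !![0,0;1,0] := by
      ext i j; fin_cases i <;> fin_cases j <;>
        simp [Matrix.mul_apply, Matrix.vecMul, Matrix.vecHead, Matrix.vecTail, dotProduct, Fin.sum_univ_two]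
    have h2 : μ (!![0,0;0,1] * A * !![1,0;0,0]) = !![0,0;0,1] * μ A * !![1,0;0,0] := by
      rw [hmul, hmul, h11, h22]
    rw [h1, hmul, hdiag, ← hC, hCval] at h2
    have := congrFun (congrFun h2 1) 0
    simpa [Matrix.mul_apply, Matrix.vecMul, Matrix.vecHead, Matrix.vecTail, dotProduct, Fin.sum_univ_two] using this.symm
  rcases Int.mul_eq_one_iff_eq_one_or_neg_one.mp hεδ with ⟨he, hd⟩ | ⟨he, hd⟩
  · left
    intro A
    ext i j; fin_cases i <;> fin_cases j <;>
      simp [e00 A, e01 A, e10 A, e11 A, he, hd]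
  · right
    intro A
    ext i j; fin_cases i <;> fin_cases j <;>
      simp [Matrix.mul_apply, Matrix.vecMul, Matrix.vecHead, Matrix.vecTail, dotProduct, Fin.sum_univ_two, e00 A, e01 A, e10 A, e11 A, he, hd]
end

section
/- Let μ : M₃(ℤ) → M₃(ℤ) be a map such that μ(AB) = μ(A)μ(B) for all A, B ∈ M₃(ℤ) and μ(D) = D for every diagonal matrix D ∈ M₃(ℤ). Then there exists a diagonal matrix W, equal to one of diag(1,1,1), diag(1,1,−1), diag(−1,1,1), diag(−1,1,−1), such that μ(A) = WAW for all A ∈ M₃(ℤ). -/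
open Matrix

private lemma sandwich (i j : Fin 3) (M : Matrix (Fin 3) (Fin 3) ℤ) :
    Matrix.single i i 1 * M * Matrix.single j j 1 = Matrix.single i j (M i j) := by
  ext a b
  by_cases ha : a = i <;> by_cases hb : b = j <;> simp_all <;>
    (rw [Matrix.single_apply_of_ne]; tauto)

private lemma std_diag (i : Fin 3) (t : ℤ) :
    Matrix.single i i t = diagonal (Pi.single i t) := by
  ext a b
  by_cases hb : b = a
  · subst hb
    by_cases ha : b = i
    · subst ha; simp
    · have h1 : ¬(i = b ∧ i = b) := fun ⟨h1, _⟩ => ha h1.symm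
      rw [diagonal_apply_eq, Pi.single_eq_of_ne ha,
        Matrix.single_apply_of_ne _ _ _ _ _ h1]
  · have h1 : ¬(i = a ∧ i = b) := fun ⟨h1, h2⟩ => hb (h2 ▸ h1 ▸ rfl)
    rw [Matrix.single_apply_of_ne _ _ _ _ _ h1,
      diagonal_apply_ne _ (fun h => hb h.symm)]

theorem stmt14 (μ : Matrix (Fin 3) (Fin 3) ℤ → Matrix (Fin 3) (Fin 3) ℤ)
    (hmul : ∀ A B : Matrix (Fin 3) (Fin 3) ℤ, μ (A * B) = μ A * μ B)
    (hdiag : ∀ d : Fin 3 → ℤ, μ (Matrix.diagonal d) = Matrix.diagonal d) :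
    ∃ W : Matrix (Fin 3) (Fin 3) ℤ,
      (W = Matrix.diagonal ![1, 1, 1] ∨ W = Matrix.diagonal ![1, 1, -1] ∨
        W = Matrix.diagonal ![-1, 1, 1] ∨ W = Matrix.diagonal ![-1, 1, -1]) ∧
      ∀ A : Matrix (Fin 3) (Fin 3) ℤ, μ A = W * A * W := by
  have hfix : ∀ (i : Fin 3) (t : ℤ), μ (Matrix.single i i t) = Matrix.single i i t := by
    intro i t; rw [std_diag, hdiag]
  set ε : Fin 3 → Fin 3 → ℤ := fun i j => μ (Matrix.single i j 1) i j with hε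
  have h1 : ∀ i j : Fin 3, μ (Matrix.single i j 1) = Matrix.single i j (ε i j) := by
    intro i j
    have e1 : Matrix.single i j (1 : ℤ) =
        Matrix.single i i 1 * Matrix.single i j 1 * Matrix.single j j 1 := by
      rw [Matrix.single_mul_single_same, Matrix.single_mul_single_same]; norm_num
    calc μ (Matrix.single i j 1)
        = μ (Matrix.single i i 1 * Matrix.single i j 1 * Matrix.single j j 1) := by
          rw [← e1]
      _ = Matrix.single i i 1 * μ (Matrix.single i j 1) * Matrix.single j j 1 := by
          rw [hmul, hmul, hfix, hfix]
      _ = Matrix.single i j (ε i j) := sandwich i j _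
  have hii : ∀ i : Fin 3, ε i i = 1 := by
    intro i
    have := congrFun (congrFun (hfix i 1) i) i
    simpa using this
  have hcoc : ∀ i j k : Fin 3, ε i j * ε j k = ε i k := by
    intro i j k
    have e1 : Matrix.single i j (1 : ℤ) * Matrix.single j k 1 = Matrix.single i k 1 := by
      rw [Matrix.single_mul_single_same]; norm_num
    have h2 := hmul (Matrix.single i j 1) (Matrix.single j k 1)
    rw [e1, h1, h1, h1, Matrix.single_mul_single_same] at h2
    have := congrFun (congrFun h2 i) k
    simpa using this.symm
  have hinv : ∀ i j : Fin 3, ε i j * ε j i = 1 := by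
    intro i j; rw [hcoc, hii]
  have hpm : ∀ i j : Fin 3, ε i j = 1 ∨ ε i j = -1 := by
    intro i j
    exact Int.isUnit_iff.mp (IsUnit.of_mul_eq_one _ (hinv i j))
  have hne : ∀ i j : Fin 3, ε i j ≠ 0 := by
    intro i j
    rcases hpm i j with h | h <;> rw [h] <;> norm_num
  have hsq : ∀ i j : Fin 3, ε i j * ε i j = 1 := by
    intro i j
    rcases hpm i j with h | h <;> rw [h] <;> norm_num
  have hsymm : ∀ i j : Fin 3, ε i j = ε j i := by
    intro i j
    have := (hinv i j).trans (hsq i j).symm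
    exact (mul_left_cancel₀ (hne i j) this).symm
  -- entrywise formula for μ
  have hA : ∀ (A : Matrix (Fin 3) (Fin 3) ℤ) (i j : Fin 3), μ A i j = ε i j * A i j := by
    intro A i j
    have hstd : μ (Matrix.single i j (A i j)) = Matrix.single i j (ε i j * A i j) := by
      have e1 : Matrix.single i j (A i j) =
          Matrix.single i j (1 : ℤ) * Matrix.single j j (A i j) := by
        rw [Matrix.single_mul_single_same]; norm_num
      rw [e1, hmul, h1, hfix, Matrix.single_mul_single_same]
    have e2 : μ (Matrix.single i j (A i j)) = Matrix.single i j (μ A i j) := by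
      rw [← sandwich i j A, hmul, hmul, hfix, hfix, sandwich i j (μ A)]
    have := (e2.symm.trans hstd)
    have := congrFun (congrFun this i) j
    simpa using this
  -- define the signs
  set w : Fin 3 → ℤ := fun i => ε i 1 with hw
  have hw1 : w 1 = 1 := hii 1
  have hεw : ∀ i j : Fin 3, ε i j = w i * w j := by
    intro i j
    rw [← hcoc i 1 j]
    simp only [hw]
    rw [hsymm 1 j]
  have hμW : ∀ A : Matrix (Fin 3) (Fin 3) ℤ, μ A = diagonal w * A * diagonal w := by
    intro A
    ext i j
    rw [hA, hεw]
    simp [Matrix.mul_apply, diagonal, Fin.sum_univ_three]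
    ring
  have hwv : ∀ (v : Fin 3 → ℤ), w 0 = v 0 → w 1 = v 1 → w 2 = v 2 → w = v := by
    intro v h0 h1' h2
    funext i
    fin_cases i <;> assumption
  refine ⟨diagonal w, ?_, hμW⟩
  rcases hpm 0 1 with h0 | h0 <;> rcases hpm 2 1 with h2 | h2
  · exact Or.inl (by rw [hwv ![1,1,1] h0 hw1 h2])
  · exact Or.inr (Or.inl (by rw [hwv ![1,1,-1] h0 hw1 h2]))
  · exact Or.inr (Or.inr (Or.inl (by rw [hwv ![-1,1,1] h0 hw1 h2])))
  · exact Or.inr (Or.inr (Or.inr (by rw [hwv ![-1,1,-1] h0 hw1 h2])))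
end

section
/- Let μ : M₂(ℤ) → M₂(ℤ) be a map such that μ(AB) = μ(A)μ(B) for all A, B ∈ M₂(ℤ) and μ(diag(a,b)) = diag(1, ab) for all a, b ∈ ℤ. Then μ(A) = diag(1, det A) for all A ∈ M₂(ℤ). -/
theorem stmt15 (μ : Matrix (Fin 2) (Fin 2) ℤ → Matrix (Fin 2) (Fin 2) ℤ)
    (hmul : ∀ A B : Matrix (Fin 2) (Fin 2) ℤ, μ (A * B) = μ A * μ B)
    (hdiag : ∀ a b : ℤ, μ (Matrix.diagonal ![a, b]) = Matrix.diagonal ![1, a * b]) :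
    ∀ A : Matrix (Fin 2) (Fin 2) ℤ, μ A = Matrix.diagonal ![1, A.det] := by
  have hdg : ∀ a b : ℤ, Matrix.diagonal ![a, b] = !![a, 0; 0, b] := by
    intro a b; ext i j; fin_cases i <;> fin_cases j <;> simp [Matrix.diagonal]
  have hdiag' : ∀ a b : ℤ, μ !![a, 0; 0, b] = !![1, 0; 0, a * b] := by
    intro a b; rw [← hdg, ← hdg]; exact hdiag a b
  have hone : (1 : Matrix (Fin 2) (Fin 2) ℤ) = !![1, 0; 0, 1] := by
    ext i j; fin_cases i <;> fin_cases j <;> simp [Matrix.one_apply]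
  have h0 : μ 0 = !![1, 0; 0, 0] := by
    have hz : (0 : Matrix (Fin 2) (Fin 2) ℤ) = !![(0 : ℤ), 0; 0, 0] := by
      ext i j; fin_cases i <;> fin_cases j <;> simp
    rw [hz]
    simpa using hdiag' 0 0
  -- structure lemma
  have hstruct : ∀ A, μ A = !![1, 0; 0, μ A 1 1] := by
    intro A
    have h1 : μ A * !![1, 0; 0, 0] = !![1, 0; 0, 0] := by rw [← h0, ← hmul, mul_zero]
    have h2 : !![(1 : ℤ), 0; 0, 0] * μ A = !![1, 0; 0, 0] := by rw [← h0, ← hmul, zero_mul]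
    have e00 := congrFun (congrFun h1 0) 0
    have e10 := congrFun (congrFun h1 1) 0
    have e01 := congrFun (congrFun h2 0) 1
    simp [Matrix.mul_apply, Fin.sum_univ_two] at e00 e10 e01
    ext i j; fin_cases i <;> fin_cases j <;> simp [e00, e10, e01]
  -- d-multiplicativity
  have dmul : ∀ A B, μ (A * B) 1 1 = μ A 1 1 * μ B 1 1 := by
    intro A B
    have h := hmul A B
    rw [hstruct A, hstruct B] at h
    rw [h]
    simp [Matrix.mul_apply, Fin.sum_univ_two]
  have ddiag : ∀ a b : ℤ, μ !![a, 0; 0, b] 1 1 = a * b := by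
    intro a b; rw [hdiag' a b]; simp
  have done1 : μ (1 : Matrix (Fin 2) (Fin 2) ℤ) 1 1 = 1 := by
    rw [hone]; simpa using ddiag 1 1
  -- upper shear
  have dT : ∀ x : ℤ, μ !![1, x; 0, 1] 1 1 = 1 := by
    intro x
    have hprod : !![(1 : ℤ), x; 0, 1] * !![1, -x; 0, 1] = 1 := by
      rw [hone, Matrix.mul_fin_two]; norm_num
    have hu : μ !![(1 : ℤ), x; 0, 1] 1 1 * μ !![(1 : ℤ), -x; 0, 1] 1 1 = 1 := by
      rw [← dmul, hprod, done1]
    have hr : !![(1 : ℤ), x; 0, 1] * !![1, 0; 0, 2] =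
        !![(1 : ℤ), 0; 0, 2] * (!![1, x; 0, 1] * !![1, x; 0, 1]) := by
      ext i j; fin_cases i <;> fin_cases j <;> simp [Matrix.mul_apply, Fin.sum_univ_two] <;> ring
    have h2 := congrArg (fun M => μ M 1 1) hr
    simp only [dmul, ddiag] at h2
    set t := μ !![(1 : ℤ), x; 0, 1] 1 1 with ht
    set y := μ !![(1 : ℤ), -x; 0, 1] 1 1 with hy
    have htt : t * t = t := by linarith
    calc t = t * (t * y) := by rw [hu, mul_one]
      _ = (t * t) * y := by ring
      _ = t * y := by rw [htt]
      _ = 1 := hu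
  -- lower shear
  have dL : ∀ x : ℤ, μ !![1, 0; x, 1] 1 1 = 1 := by
    intro x
    have hprod : !![(1 : ℤ), 0; x, 1] * !![1, 0; -x, 1] = 1 := by
      rw [hone, Matrix.mul_fin_two]; norm_num
    have hu : μ !![(1 : ℤ), 0; x, 1] 1 1 * μ !![(1 : ℤ), 0; -x, 1] 1 1 = 1 := by
      rw [← dmul, hprod, done1]
    have hr : !![(1 : ℤ), 0; x, 1] * !![2, 0; 0, 1] =
        !![(2 : ℤ), 0; 0, 1] * (!![1, 0; x, 1] * !![1, 0; x, 1]) := by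
      ext i j; fin_cases i <;> fin_cases j <;> simp [Matrix.mul_apply, Fin.sum_univ_two] <;> ring
    have h2 := congrArg (fun M => μ M 1 1) hr
    simp only [dmul, ddiag] at h2
    set t := μ !![(1 : ℤ), 0; x, 1] 1 1 with ht
    set y := μ !![(1 : ℤ), 0; -x, 1] 1 1 with hy
    have htt : t * t = t := by linarith
    calc t = t * (t * y) := by rw [hu, mul_one]
      _ = (t * t) * y := by ring
      _ = t * y := by rw [htt]
      _ = 1 := hu
  -- swap
  have dS : μ !![(0 : ℤ), 1; 1, 0] 1 1 = -1 := by
    have hS : !![(0 : ℤ), 1; 1, 0] =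
        !![(1 : ℤ), 0; 0, -1] * (!![1, 1; 0, 1] * (!![1, 0; -1, 1] * !![1, 1; 0, 1])) := by
      rw [Matrix.mul_fin_two, Matrix.mul_fin_two, Matrix.mul_fin_two]; norm_num
    rw [hS, dmul, dmul, dmul, ddiag, dT 1, dL (-1)]
    norm_num
  -- triangular
  have dtri : ∀ a b e : ℤ, μ !![a, b; 0, e] 1 1 = a * e := by
    intro a b e
    have h : !![a, b; 0, e] = !![(1 : ℤ), 0; 0, e] * (!![1, b; 0, 1] * !![a, 0; 0, 1]) := by
      rw [Matrix.mul_fin_two, Matrix.mul_fin_two]; norm_num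
    rw [h, dmul, dmul, ddiag, ddiag, dT b]
    ring
  -- main induction
  have main : ∀ n : ℕ, ∀ A : Matrix (Fin 2) (Fin 2) ℤ, (A 1 0).natAbs ≤ n →
      μ A 1 1 = A.det := by
    intro n
    induction n with
    | zero =>
      intro A hA
      have hc : A 1 0 = 0 := by omega
      have hAe : A = !![A 0 0, A 0 1; 0, A 1 1] := by rw [← hc]; exact Matrix.eta_fin_two A
      rw [hAe, dtri, Matrix.det_fin_two_of]
      ring
    | succ n ih =>
      intro A hA
      by_cases hc : A 1 0 = 0
      · have hAe : A = !![A 0 0, A 0 1; 0, A 1 1] := by rw [← hc]; exact Matrix.eta_fin_two A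
        rw [hAe, dtri, Matrix.det_fin_two_of]
        ring
      · set c := A 1 0 with hcc
        set q := A 0 0 / c with hq
        set B := !![(0 : ℤ), 1; 1, 0] * (!![1, -q; 0, 1] * A) with hB
        have hB10 : B 1 0 = A 0 0 % c := by
          rw [hB]
          simp [Matrix.mul_apply, Fin.sum_univ_two, Matrix.vecMul, dotProduct]
          rw [Int.emod_def]
          ring
        have hlt : (B 1 0).natAbs ≤ n := by
          have h1 : 0 ≤ A 0 0 % c := Int.emod_nonneg _ hc
          have h2 : A 0 0 % c < |c| := by
            have := Int.emod_lt (A 0 0) hc; rw [Int.abs_eq_natAbs]; exact this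
          rw [Int.abs_eq_natAbs] at h2
          rw [hB10]
          omega
        have hdB := ih B hlt
        have hSS : !![(0 : ℤ), 1; 1, 0] * !![(0 : ℤ), 1; 1, 0] = 1 := by
          rw [hone, Matrix.mul_fin_two]; norm_num
        have hTT : !![(1 : ℤ), q; 0, 1] * !![(1 : ℤ), -q; 0, 1] = 1 := by
          rw [hone, Matrix.mul_fin_two]; norm_num
        have hAeq : A = !![(1 : ℤ), q; 0, 1] * (!![(0 : ℤ), 1; 1, 0] * B) := by
          have h1 : !![(0 : ℤ), 1; 1, 0] * (!![(0 : ℤ), 1; 1, 0] * (!![(1 : ℤ), -q; 0, 1] * A))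
              = !![(1 : ℤ), -q; 0, 1] * A := by rw [← mul_assoc, hSS, one_mul]
          rw [hB, h1, ← mul_assoc, hTT, one_mul]
        have hdet : B.det = -A.det := by
          rw [hB, Matrix.det_mul, Matrix.det_mul, Matrix.det_fin_two_of, Matrix.det_fin_two_of]
          ring
        calc μ A 1 1 = μ (!![(1 : ℤ), q; 0, 1] * (!![(0 : ℤ), 1; 1, 0] * B)) 1 1 := by
              rw [← hAeq]
          _ = μ !![(1 : ℤ), q; 0, 1] 1 1 * (μ !![(0 : ℤ), 1; 1, 0] 1 1 * μ B 1 1) := by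
              rw [dmul, dmul]
          _ = 1 * (-1 * B.det) := by rw [dT, dS, hdB]
          _ = A.det := by rw [hdet]; ring
  intro A
  have hd := main (A 1 0).natAbs A le_rfl
  rw [hstruct A, hd, hdg]
end

section
/- Let μ : M₃(ℤ) → M₄(ℤ) be a map such that μ(AB) = μ(A)μ(B) for all A, B ∈ M₃(ℤ) and μ(diag(a,b,c)) = diag(abc, a, b, c) for all a, b, c ∈ ℤ. Then there exists a diagonal matrix W ∈ M₃(ℤ) with all diagonal entries in {1, −1} such that for every A ∈ M₃(ℤ), μ(A) is the block diagonal matrix with 1 × 1 block (det A) and 3 × 3 block W·A·W. -/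
/-- The `4 × 4` block diagonal matrix whose `(1,1)` entry is `d`, whose lower-right
`3 × 3` block is `B`, and whose remaining entries are `0`. -/
def blockDiag1 (d : ℤ) (B : Matrix (Fin 3) (Fin 3) ℤ) : Matrix (Fin 4) (Fin 4) ℤ :=
  Matrix.reindex finSumFinEquiv finSumFinEquiv
    (Matrix.fromBlocks (Matrix.diagonal (fun _ : Fin 1 => d)) 0 0 B)

namespace Stmt16Aux

open Matrix

abbrev M3 := Matrix (Fin 3) (Fin 3) ℤ
abbrev M4 := Matrix (Fin 4) (Fin 4) ℤ

/- entry lemmas for blockDiag1, numeral form -/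
section BD
variable (d : ℤ) (B : M3)
@[simp] lemma bd00 : blockDiag1 d B 0 0 = d := rfl
@[simp] lemma bd01 : blockDiag1 d B 0 1 = 0 := rfl
@[simp] lemma bd02 : blockDiag1 d B 0 2 = 0 := rfl
@[simp] lemma bd03 : blockDiag1 d B 0 3 = 0 := rfl
@[simp] lemma bd10 : blockDiag1 d B 1 0 = 0 := rfl
@[simp] lemma bd20 : blockDiag1 d B 2 0 = 0 := rfl
@[simp] lemma bd30 : blockDiag1 d B 3 0 = 0 := rfl
@[simp] lemma bd11 : blockDiag1 d B 1 1 = B 0 0 := rfl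
@[simp] lemma bd12 : blockDiag1 d B 1 2 = B 0 1 := rfl
@[simp] lemma bd13 : blockDiag1 d B 1 3 = B 0 2 := rfl
@[simp] lemma bd21 : blockDiag1 d B 2 1 = B 1 0 := rfl
@[simp] lemma bd22 : blockDiag1 d B 2 2 = B 1 1 := rfl
@[simp] lemma bd23 : blockDiag1 d B 2 3 = B 1 2 := rfl
@[simp] lemma bd31 : blockDiag1 d B 3 1 = B 2 0 := rfl
@[simp] lemma bd32 : blockDiag1 d B 3 2 = B 2 1 := rfl
@[simp] lemma bd33 : blockDiag1 d B 3 3 = B 2 2 := rfl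
end BD

@[simp] lemma succ_two_fin : Fin.succ (2 : Fin 3) = (3 : Fin 4) := rfl
@[simp] lemma succ_one_fin : Fin.succ (1 : Fin 3) = (2 : Fin 4) := rfl
@[simp] lemma succ_zero_fin : Fin.succ (0 : Fin 3) = (1 : Fin 4) := rfl

lemma bd_ext {M : M4} {d : ℤ} {B : M3} (h00 : M 0 0 = d) (h0s : ∀ j : Fin 3, M 0 j.succ = 0)
    (hs0 : ∀ i : Fin 3, M i.succ 0 = 0) (hss : ∀ i j : Fin 3, M i.succ j.succ = B i j) :
    M = blockDiag1 d B := by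
  ext a b
  fin_cases a <;> fin_cases b
  · exact h00
  · exact (h0s 0).trans (bd01 d B).symm
  · exact (h0s 1).trans (bd02 d B).symm
  · exact (h0s 2).trans (bd03 d B).symm
  · exact (hs0 0).trans (bd10 d B).symm
  · exact (hss 0 0).trans (bd11 d B).symm
  · exact (hss 0 1).trans (bd12 d B).symm
  · exact (hss 0 2).trans (bd13 d B).symm
  · exact (hs0 1).trans (bd20 d B).symm
  · exact (hss 1 0).trans (bd21 d B).symm
  · exact (hss 1 1).trans (bd22 d B).symm
  · exact (hss 1 2).trans (bd23 d B).symm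
  · exact (hs0 2).trans (bd30 d B).symm
  · exact (hss 2 0).trans (bd31 d B).symm
  · exact (hss 2 1).trans (bd32 d B).symm
  · exact (hss 2 2).trans (bd33 d B).symm

/-- product of two blockDiag1. -/
lemma blockDiag1_mul (d₁ d₂ : ℤ) (B₁ B₂ : M3) :
    blockDiag1 d₁ B₁ * blockDiag1 d₂ B₂ = blockDiag1 (d₁ * d₂) (B₁ * B₂) := by
  apply bd_ext
  · simp [mul_apply, Fin.sum_univ_four]
  · intro j; fin_cases j <;> simp [mul_apply, Fin.sum_univ_four, Fin.sum_univ_three]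
  · intro i; fin_cases i <;> simp [mul_apply, Fin.sum_univ_four]
  · intro i j; fin_cases i <;> fin_cases j <;>
      simp [mul_apply, Fin.sum_univ_four, Fin.sum_univ_three]

/-- generic: indicator diagonal sandwich. -/
lemma sandwich_diag {n : Type*} [Fintype n] [DecidableEq n] (M : Matrix n n ℤ) (i j : n) :
    diagonal (fun k => if k = i then (1:ℤ) else 0) * M *
      diagonal (fun k => if k = j then (1:ℤ) else 0) = Matrix.single i j (M i j) := by
  ext a b
  rw [mul_diagonal, diagonal_mul]
  by_cases ha : i = a <;> by_cases hb : j = b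
  · subst ha; subst hb; simp [Matrix.single]
  · subst ha; simp [Matrix.single, hb, Ne.symm hb]
  · subst hb; simp [Matrix.single, ha, Ne.symm ha]
  · simp [Matrix.single, ha, hb, Ne.symm ha, Ne.symm hb]

section Mu
variable (μ : M3 → M4)
  (hmul : ∀ A B : M3, μ (A * B) = μ A * μ B)
  (hdiag : ∀ a b c : ℤ, μ (Matrix.diagonal ![a, b, c]) = Matrix.diagonal ![a * b * c, a, b, c])

set_option linter.unusedSectionVars false

include hmul hdiag

lemma mu_diag (v : Fin 3 → ℤ) :
    μ (diagonal v) = diagonal ![v 0 * v 1 * v 2, v 0, v 1, v 2] := by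
  rw [show (diagonal v : M3) = diagonal ![v 0, v 1, v 2] by
    congr 1; funext k; fin_cases k <;> rfl]
  exact hdiag _ _ _

lemma mu_one : μ 1 = 1 := by
  have h := mu_diag μ hmul hdiag (fun _ => 1)
  rw [diagonal_one] at h
  rw [h, show (![1*1*1,1,1,1] : Fin 4 → ℤ) = fun _ => 1 by funext k; fin_cases k <;> norm_num]
  exact diagonal_one

end Mu

/-- diagonal idempotents -/
def ei (i : Fin 3) : M3 := Matrix.single i i 1

lemma ei_diag (i : Fin 3) : ei i = diagonal (fun k => if k = i then (1:ℤ) else 0) := by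
  ext a b
  by_cases ha : i = a <;> by_cases hb : i = b
  · subst ha; subst hb; simp [ei, Matrix.single]
  · subst ha; simp [ei, Matrix.single, hb, diagonal_apply, Ne.symm hb]
  · subst hb; simp [ei, Matrix.single, ha, diagonal_apply, Ne.symm ha]
  · by_cases hab : a = b
    · subst hab; simp [ei, Matrix.single, ha, Ne.symm ha]
    · simp [ei, Matrix.single, ha, hab, diagonal_apply_ne _ hab]

/-- the entry function for basis matrices -/
def gf (μ : M3 → M4) (i j : Fin 3) (a : ℤ) : ℤ := μ (Matrix.single i j a) i.succ j.succ

/-- sign function -/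
def epsf (μ : M3 → M4) (i j : Fin 3) : ℤ := gf μ i j 1

/-- the diagonal sign vector -/
def dv (μ : M3 → M4) (i : Fin 3) : ℤ := epsf μ 0 i

section Mu2
variable (μ : M3 → M4)
  (hmul : ∀ A B : M3, μ (A * B) = μ A * μ B)
  (hdiag : ∀ a b c : ℤ, μ (Matrix.diagonal ![a, b, c]) = Matrix.diagonal ![a * b * c, a, b, c])

set_option linter.unusedSectionVars false

include hmul hdiag

lemma mu_ei (i : Fin 3) :
    μ (ei i) = diagonal (fun k : Fin 4 => if k = i.succ then (1:ℤ) else 0) := by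
  rw [ei_diag, mu_diag μ hmul hdiag]
  ext a b
  fin_cases i <;> fin_cases a <;> fin_cases b <;> simp [diagonal_apply] <;> decide

lemma mu_sandwich (A : M3) (i j : Fin 3) :
    μ (Matrix.single i j (A i j)) = Matrix.single i.succ j.succ (μ A i.succ j.succ) := by
  have h : Matrix.single i j (A i j) = ei i * A * ei j := by
    rw [ei_diag, ei_diag]; exact (sandwich_diag A i j).symm
  rw [h, hmul, hmul, mu_ei μ hmul hdiag, mu_ei μ hmul hdiag]
  exact sandwich_diag (μ A) i.succ j.succ

lemma mu_std (i j : Fin 3) (a : ℤ) :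
    μ (Matrix.single i j a) = Matrix.single i.succ j.succ (gf μ i j a) := by
  have h := mu_sandwich μ hmul hdiag (Matrix.single i j a) i j
  rwa [Matrix.single_apply_same] at h

lemma gf_mul (i j k : Fin 3) (a b : ℤ) : gf μ i k (a * b) = gf μ i j a * gf μ j k b := by
  have h := hmul (Matrix.single i j a) (Matrix.single j k b)
  rw [Matrix.single_mul_single_same, mu_std μ hmul hdiag, mu_std μ hmul hdiag,
    mu_std μ hmul hdiag, Matrix.single_mul_single_same] at h
  have h2 := congrFun (congrFun h i.succ) k.succ
  simpa [Matrix.single_apply_same, gf] using h2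

lemma gf_diag0 (a : ℤ) : gf μ 0 0 a = a := by
  have h : Matrix.single (0 : Fin 3) 0 a = diagonal ![a, 0, 0] := by
    ext x y; fin_cases x <;> fin_cases y <;> simp [Matrix.single, diagonal]
  show μ (Matrix.single 0 0 a) 1 1 = a
  rw [h, hdiag]; norm_num

lemma gf_diag1 (a : ℤ) : gf μ 1 1 a = a := by
  have h : Matrix.single (1 : Fin 3) 1 a = diagonal ![0, a, 0] := by
    ext x y; fin_cases x <;> fin_cases y <;> simp [Matrix.single, diagonal]
  show μ (Matrix.single 1 1 a) 2 2 = a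
  rw [h, hdiag]; norm_num; rfl

lemma gf_diag2 (a : ℤ) : gf μ 2 2 a = a := by
  have h : Matrix.single (2 : Fin 3) 2 a = diagonal ![0, 0, a] := by
    ext x y; fin_cases x <;> fin_cases y <;> simp [Matrix.single, diagonal]
  show μ (Matrix.single 2 2 a) 3 3 = a
  rw [h, hdiag]; norm_num; rfl

lemma gf_diag (i : Fin 3) (a : ℤ) : gf μ i i a = a := by
  fin_cases i
  · exact gf_diag0 μ hmul hdiag a
  · exact gf_diag1 μ hmul hdiag a
  · exact gf_diag2 μ hmul hdiag a

lemma eps_mul (i j k : Fin 3) : epsf μ i j * epsf μ j k = epsf μ i k := by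
  have := gf_mul μ hmul hdiag i j k 1 1
  simpa [epsf] using this.symm

lemma eps_inv (i j : Fin 3) : epsf μ i j * epsf μ j i = 1 := by
  have h := eps_mul μ hmul hdiag i j i
  rwa [show epsf μ i i = 1 from gf_diag μ hmul hdiag i 1] at h

lemma gf_eq (i j : Fin 3) (a : ℤ) : gf μ i j a = a * epsf μ i j := by
  have h := gf_mul μ hmul hdiag i i j a 1
  rwa [mul_one, gf_diag μ hmul hdiag i a] at h

lemma mu_interior (A : M3) (i j : Fin 3) :
    μ A i.succ j.succ = A i j * epsf μ i j := by
  have h := mu_sandwich μ hmul hdiag A i j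
  rw [mu_std μ hmul hdiag] at h
  have h2 := congrFun (congrFun h i.succ) j.succ
  rw [Matrix.single_apply_same, Matrix.single_apply_same] at h2
  rw [← h2, gf_eq μ hmul hdiag]

lemma dv_pm (i : Fin 3) : dv μ i = 1 ∨ dv μ i = -1 :=
  Int.eq_one_or_neg_one_of_mul_eq_one (eps_inv μ hmul hdiag 0 i)

lemma eps_symm (i j : Fin 3) : epsf μ i j = epsf μ j i :=
  Int.eq_of_mul_eq_one (eps_inv μ hmul hdiag i j)

lemma eps_dd (i j : Fin 3) : epsf μ i j = dv μ i * dv μ j := by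
  rw [dv, dv, eps_symm μ hmul hdiag 0 i]
  exact (eps_mul μ hmul hdiag i 0 j).symm

end Mu2

lemma conj_transvection (i j : Fin 3) (hij : i ≠ j) (t : ℤ) (s : Fin 3 → ℤ)
    (hs : ∀ k, s k = 1 ∨ s k = -1) :
    diagonal s * transvection i j t * diagonal s = transvection i j (s i * s j * t) := by
  ext a b
  rw [mul_diagonal, diagonal_mul]
  by_cases hab : a = b
  · subst hab
    have hne : ¬ (i = a ∧ j = a) := fun h => hij (h.1.trans h.2.symm)
    simp only [transvection, Matrix.add_apply, one_apply_eq, Matrix.single, of_apply, if_neg hne]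
    rcases hs a with h | h <;> rw [h] <;> ring
  · by_cases hia : i = a <;> by_cases hjb : j = b <;>
      simp only [transvection, Matrix.add_apply, one_apply_ne hab, Matrix.single, of_apply,
        hia, hjb, and_self, if_true, if_neg, and_false, false_and,
        not_false_eq_true, zero_add, add_zero, mul_zero, zero_mul] <;>
      first
        | (subst hia; subst hjb; ring)
        | simp [hjb, hia]

lemma dmul_transvection (i j : Fin 3) (hij : i ≠ j) (t : ℤ) :
    diagonal (fun k => if k = i then (2:ℤ) else 1) * transvection i j t =
      transvection i j (t + t) * diagonal (fun k => if k = i then (2:ℤ) else 1) := by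
  ext a b
  rw [mul_diagonal, diagonal_mul]
  by_cases hab : a = b
  · subst hab
    have hne : ¬ (i = a ∧ j = a) := fun h => hij (h.1.trans h.2.symm)
    simp only [transvection, Matrix.add_apply, one_apply_eq, Matrix.single, of_apply, if_neg hne]
    ring
  · by_cases hia : i = a <;> by_cases hjb : j = b
    · subst hia; subst hjb
      simp only [transvection, Matrix.add_apply, one_apply_ne hab, Matrix.single, of_apply,
        and_self, if_true, if_pos rfl, if_neg (Ne.symm hij)]
      ring
    · simp only [transvection, Matrix.add_apply, one_apply_ne hab, Matrix.single, of_apply,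
        hjb, and_false, if_neg, if_false, zero_add, add_zero]
      simp [hia]
    · subst hjb
      have : ¬ (i = a) := hia
      simp only [transvection, Matrix.add_apply, one_apply_ne hab, Matrix.single, of_apply]
      simp [hia, if_neg (Ne.symm hij)]
    · simp only [transvection, Matrix.add_apply, one_apply_ne hab, Matrix.single, of_apply]
      simp [hia, hjb]

lemma rowswap_p (p q : Fin 3) (hpq : p ≠ q) (A : M3) (b : Fin 3) :
    ((transvection p q 1 * (transvection q p (-1) * (transvection p q 1 * A)) : M3)) p b = A q b := by
  simp [transvection_mul_apply_same, transvection_mul_apply_of_ne, hpq, hpq.symm] <;> ring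

lemma rowswap_q (p q : Fin 3) (hpq : p ≠ q) (A : M3) (b : Fin 3) :
    ((transvection p q 1 * (transvection q p (-1) * (transvection p q 1 * A)) : M3)) q b = -(A p b) := by
  simp [transvection_mul_apply_same, transvection_mul_apply_of_ne, hpq, hpq.symm] <;> ring

lemma rowswap_other (p q : Fin 3) (hpq : p ≠ q) (r : Fin 3) (hrp : r ≠ p) (hrq : r ≠ q)
    (A : M3) (b : Fin 3) :
    ((transvection p q 1 * (transvection q p (-1) * (transvection p q 1 * A)) : M3)) r b = A r b := by
  simp [transvection_mul_apply_of_ne, hrp, hrq]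

lemma colswap_p (p q : Fin 3) (hpq : p ≠ q) (A : M3) (a : Fin 3) :
    ((A * transvection p q 1 * transvection q p (-1) * transvection p q 1 : M3)) a p = -(A a q) := by
  simp [mul_transvection_apply_same, mul_transvection_apply_of_ne, hpq, hpq.symm] <;> ring

lemma colswap_q (p q : Fin 3) (hpq : p ≠ q) (A : M3) (a : Fin 3) :
    ((A * transvection p q 1 * transvection q p (-1) * transvection p q 1 : M3)) a q = A a p := by
  simp [mul_transvection_apply_same, mul_transvection_apply_of_ne, hpq, hpq.symm] <;> ring

lemma colswap_other (p q : Fin 3) (hpq : p ≠ q) (r : Fin 3) (hrp : r ≠ p) (hrq : r ≠ q)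
    (A : M3) (a : Fin 3) :
    ((A * transvection p q 1 * transvection q p (-1) * transvection p q 1 : M3)) a r = A a r := by
  simp [mul_transvection_apply_of_ne, hrp, hrq]

lemma natAbs_emod_lt (a b : ℤ) (h : b ≠ 0) : (a % b).natAbs < b.natAbs := by
  have h1 := Int.emod_nonneg a h
  have h2 := Int.emod_lt a h
  omega

lemma vet (p : ℤ) (s : Fin 3 → ℤ) (j : Fin 3) :
    (![p, s 0, s 1, s 2] : Fin 4 → ℤ) j.succ = s j := by fin_cases j <;> rfl

lemma tri {n : Type*} [Fintype n] [DecidableEq n] (v : n → ℤ) (M : Matrix n n ℤ) (a b : n) :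
    (diagonal v * M * diagonal v) a b = v a * M a b * v b := by
  rw [mul_diagonal, diagonal_mul]

section Mu3
variable (μ : M3 → M4)
  (hmul : ∀ A B : M3, μ (A * B) = μ A * μ B)
  (hdiag : ∀ a b c : ℤ, μ (Matrix.diagonal ![a, b, c]) = Matrix.diagonal ![a * b * c, a, b, c])

set_option linter.unusedSectionVars false

include hmul hdiag

lemma mu_row0_ne (i j : Fin 3) (t : ℤ) (b : Fin 3) (hb : b ≠ j) :
    μ (transvection i j t) 0 b.succ = 0 := by
  have hTe : transvection i j t * ei b = ei b := by
    simp [transvection, ei, add_mul, Matrix.single_mul_single_of_ne _ _ _ _ (Ne.symm hb)]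
  have h := hmul (transvection i j t) (ei b)
  rw [hTe, mu_ei μ hmul hdiag] at h
  have h2 := congrFun (congrFun h 0) b.succ
  rw [diagonal_apply_ne _ (Fin.succ_ne_zero b).symm, mul_diagonal, if_pos rfl, mul_one] at h2
  exact h2.symm

lemma mu_col0_ne (i j : Fin 3) (t : ℤ) (a : Fin 3) (ha : a ≠ i) :
    μ (transvection i j t) a.succ 0 = 0 := by
  have hTe : ei a * transvection i j t = ei a := by
    simp [transvection, ei, mul_add, Matrix.single_mul_single_of_ne _ _ _ _ ha]
  have h := hmul (ei a) (transvection i j t)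
  rw [hTe, mu_ei μ hmul hdiag] at h
  have h2 := congrFun (congrFun h a.succ) 0
  rw [diagonal_apply_ne _ (Fin.succ_ne_zero a), diagonal_mul, if_pos rfl, one_mul] at h2
  exact h2.symm

lemma mu_conj_entry (i j : Fin 3) (hij : i ≠ j) (t : ℤ) (s : Fin 3 → ℤ)
    (hs : ∀ k, s k = 1 ∨ s k = -1) (hprod : s 0 * s 1 * s 2 = -1) (a b : Fin 4) :
    μ (transvection i j (s i * s j * t)) a b =
      (![(-1 : ℤ), s 0, s 1, s 2] : Fin 4 → ℤ) a * μ (transvection i j t) a b *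
        (![(-1 : ℤ), s 0, s 1, s 2] : Fin 4 → ℤ) b := by
  have h1 := hmul (diagonal s) (transvection i j t)
  have h := hmul (diagonal s * transvection i j t) (diagonal s)
  rw [conj_transvection i j hij t s hs, h1, mu_diag μ hmul hdiag s, hprod] at h
  have h2 := congrFun (congrFun h a) b
  rw [h2, tri]

lemma mu_conj_row (i j : Fin 3) (hij : i ≠ j) (t : ℤ) (s : Fin 3 → ℤ)
    (hs : ∀ k, s k = 1 ∨ s k = -1) (hprod : s 0 * s 1 * s 2 = -1) :
    μ (transvection i j (s i * s j * t)) 0 j.succ =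
      -1 * μ (transvection i j t) 0 j.succ * s j := by
  have h := mu_conj_entry μ hmul hdiag i j hij t s hs hprod 0 j.succ
  rwa [show (![(-1:ℤ), s 0, s 1, s 2] : Fin 4 → ℤ) 0 = -1 from rfl, vet] at h

lemma mu_conj_col (i j : Fin 3) (hij : i ≠ j) (t : ℤ) (s : Fin 3 → ℤ)
    (hs : ∀ k, s k = 1 ∨ s k = -1) (hprod : s 0 * s 1 * s 2 = -1) :
    μ (transvection i j (s i * s j * t)) i.succ 0 =
      s i * μ (transvection i j t) i.succ 0 * -1 := by
  have h := mu_conj_entry μ hmul hdiag i j hij t s hs hprod i.succ 0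
  rwa [show (![(-1:ℤ), s 0, s 1, s 2] : Fin 4 → ℤ) 0 = -1 from rfl, vet] at h

lemma mu_row0_j (i j : Fin 3) (hij : i ≠ j) (t : ℤ) :
    μ (transvection i j t) 0 j.succ = 0 := by
  have k1 := mu_conj_row μ hmul hdiag i j hij t (fun k => if k = i then -1 else 1)
    (by intro k; by_cases h : k = i <;> simp [h])
    (by fin_cases i <;> decide)
  have k2 := mu_conj_row μ hmul hdiag i j hij t (fun k => if k = j then -1 else 1)
    (by intro k; by_cases h : k = j <;> simp [h])
    (by fin_cases j <;> decide)
  simp [hij, hij.symm] at k1 k2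
  omega

lemma mu_col0_i (i j : Fin 3) (hij : i ≠ j) (t : ℤ) :
    μ (transvection i j t) i.succ 0 = 0 := by
  have k1 := mu_conj_col μ hmul hdiag i j hij t (fun k => if k = i then -1 else 1)
    (by intro k; by_cases h : k = i <;> simp [h])
    (by fin_cases i <;> decide)
  have k2 := mu_conj_col μ hmul hdiag i j hij t (fun k => if k = j then -1 else 1)
    (by intro k; by_cases h : k = j <;> simp [h])
    (by fin_cases j <;> decide)
  simp [hij, hij.symm] at k1 k2
  omega

lemma mu_row0 (i j : Fin 3) (hij : i ≠ j) (t : ℤ) (b : Fin 3) :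
    μ (transvection i j t) 0 b.succ = 0 := by
  by_cases hb : b = j
  · subst hb; exact mu_row0_j μ hmul hdiag i b hij t
  · exact mu_row0_ne μ hmul hdiag i j t b hb

lemma mu_col0 (i j : Fin 3) (hij : i ≠ j) (t : ℤ) (a : Fin 3) :
    μ (transvection i j t) a.succ 0 = 0 := by
  by_cases ha : a = i
  · subst ha; exact mu_col0_i μ hmul hdiag a j hij t
  · exact mu_col0_ne μ hmul hdiag i j t a ha

lemma mu_t00 (i j : Fin 3) (hij : i ≠ j) (t : ℤ) :
    μ (transvection i j t) 0 0 = 1 := by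
  have r1 : ∀ u : ℤ, μ (transvection i j u) 0 1 = 0 := fun u => mu_row0 μ hmul hdiag i j hij u 0
  have r2 : ∀ u : ℤ, μ (transvection i j u) 0 2 = 0 := fun u => mu_row0 μ hmul hdiag i j hij u 1
  have r3 : ∀ u : ℤ, μ (transvection i j u) 0 3 = 0 := fun u => mu_row0 μ hmul hdiag i j hij u 2
  have e1 : μ (transvection i j t) * μ (transvection i j (-t)) = 1 := by
    rw [← hmul, transvection_mul_transvection_same _ _ hij, add_neg_cancel,
      transvection_zero, mu_one μ hmul hdiag]
  have h1 := congrFun (congrFun e1 0) 0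
  rw [mul_apply, Fin.sum_univ_four] at h1
  rw [r1, r2, r3, zero_mul, zero_mul, zero_mul, add_zero, add_zero, add_zero] at h1
  rw [one_apply_eq] at h1
  have e2 : μ (transvection i j (t + t)) = μ (transvection i j t) * μ (transvection i j t) := by
    rw [← hmul, transvection_mul_transvection_same _ _ hij]
  have h2 := congrFun (congrFun e2 0) 0
  rw [mul_apply, Fin.sum_univ_four] at h2
  rw [r1, r2, r3, zero_mul, zero_mul, zero_mul, add_zero, add_zero, add_zero] at h2
  have e3 : μ (diagonal (fun k => if k = i then (2:ℤ) else 1)) * μ (transvection i j t) =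
      μ (transvection i j (t + t)) * μ (diagonal (fun k => if k = i then (2:ℤ) else 1)) := by
    rw [← hmul, ← hmul, dmul_transvection i j hij t]
  have hD := mu_diag μ hmul hdiag (fun k => if k = i then (2:ℤ) else 1)
  have hD0 : (![(if (0:Fin 3) = i then (2:ℤ) else 1) * (if (1:Fin 3) = i then (2:ℤ) else 1) *
      (if (2:Fin 3) = i then (2:ℤ) else 1), (if (0:Fin 3) = i then (2:ℤ) else 1),
      (if (1:Fin 3) = i then (2:ℤ) else 1), (if (2:Fin 3) = i then (2:ℤ) else 1)] : Fin 4 → ℤ) 0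
      = 2 := by
    fin_cases i <;> decide
  have h3 := congrFun (congrFun e3 0) 0
  rw [hD, diagonal_mul, mul_diagonal, hD0] at h3
  -- h3 : 2 * μ (T t) 0 0 = μ (T (t+t)) 0 0 * 2
  have hx : μ (transvection i j t) 0 0 * μ (transvection i j t) 0 0
      = μ (transvection i j t) 0 0 := by omega
  have hne : μ (transvection i j t) 0 0 ≠ 0 := by
    intro h0; rw [h0, zero_mul] at h1; exact one_ne_zero h1.symm
  have := mul_left_cancel₀ hne (by rw [hx, mul_one] :
    μ (transvection i j t) 0 0 * μ (transvection i j t) 0 0 = μ (transvection i j t) 0 0 * 1)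
  exact this

lemma mu_transvection (i j : Fin 3) (hij : i ≠ j) (t : ℤ) :
    μ (transvection i j t) = blockDiag1 (transvection i j t).det
      (diagonal (dv μ) * transvection i j t * diagonal (dv μ)) := by
  apply bd_ext
  · rw [mu_t00 μ hmul hdiag i j hij t, det_transvection_of_ne _ _ hij]
  · exact mu_row0 μ hmul hdiag i j hij t
  · exact mu_col0 μ hmul hdiag i j hij t
  · intro a b
    rw [mu_interior μ hmul hdiag, tri, eps_dd μ hmul hdiag]
    ring

lemma dv_sq (i : Fin 3) : dv μ i * dv μ i = 1 := by
  rcases dv_pm μ hmul hdiag i with h | h <;> rw [h] <;> norm_num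

lemma WW : diagonal (dv μ) * diagonal (dv μ) = (1 : M3) := by
  rw [diagonal_mul_diagonal,
    show (fun i => dv μ i * dv μ i) = fun _ => (1:ℤ) from funext fun i => dv_sq μ hmul hdiag i,
    diagonal_one]

/-- The target form. -/
def FF (μ : M3 → M4) (A : M3) : M4 :=
  blockDiag1 A.det (diagonal (dv μ) * A * diagonal (dv μ))

lemma FF_mul (A B : M3) : FF μ A * FF μ B = FF μ (A * B) := by
  have hW : diagonal (dv μ) * A * diagonal (dv μ) * (diagonal (dv μ) * B * diagonal (dv μ))
      = diagonal (dv μ) * (A * B) * diagonal (dv μ) :=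
    calc diagonal (dv μ) * A * diagonal (dv μ) * (diagonal (dv μ) * B * diagonal (dv μ))
        = diagonal (dv μ) * (A * ((diagonal (dv μ) * diagonal (dv μ)) * (B * diagonal (dv μ)))) := by
          simp only [Matrix.mul_assoc]
      _ = diagonal (dv μ) * (A * B) * diagonal (dv μ) := by
          rw [WW μ hmul hdiag, Matrix.one_mul]; simp only [Matrix.mul_assoc]
  rw [FF, FF, FF, blockDiag1_mul, det_mul, hW]

lemma mu_trans' (i j : Fin 3) (hij : i ≠ j) (t : ℤ) :
    μ (transvection i j t) = FF μ (transvection i j t) :=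
  mu_transvection μ hmul hdiag i j hij t

lemma P_mul_left (i j : Fin 3) (hij : i ≠ j) (t : ℤ) (A : M3)
    (h : μ (transvection i j t * A) = FF μ (transvection i j t * A)) :
    μ A = FF μ A := by
  have e : transvection i j (-t) * (transvection i j t * A) = A := by
    rw [← Matrix.mul_assoc, transvection_mul_transvection_same _ _ hij, neg_add_cancel,
      transvection_zero, Matrix.one_mul]
  calc μ A = μ (transvection i j (-t)) * μ (transvection i j t * A) := by rw [← hmul, e]
    _ = FF μ (transvection i j (-t)) * FF μ (transvection i j t * A) := by
        rw [mu_trans' μ hmul hdiag i j hij, h]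
    _ = FF μ A := by rw [FF_mul μ hmul hdiag, e]

lemma P_mul_right (i j : Fin 3) (hij : i ≠ j) (t : ℤ) (A : M3)
    (h : μ (A * transvection i j t) = FF μ (A * transvection i j t)) :
    μ A = FF μ A := by
  have e : (A * transvection i j t) * transvection i j (-t) = A := by
    rw [Matrix.mul_assoc, transvection_mul_transvection_same _ _ hij, add_neg_cancel,
      transvection_zero, Matrix.mul_one]
  calc μ A = μ (A * transvection i j t) * μ (transvection i j (-t)) := by rw [← hmul, e]
    _ = FF μ (A * transvection i j t) * FF μ (transvection i j (-t)) := by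
        rw [mu_trans' μ hmul hdiag i j hij, h]
    _ = FF μ A := by rw [FF_mul μ hmul hdiag, e]

lemma P_diag (v : Fin 3 → ℤ) : μ (diagonal v) = FF μ (diagonal v) := by
  rw [mu_diag μ hmul hdiag, FF]
  have hdet : (diagonal v).det = v 0 * v 1 * v 2 := by
    rw [det_diagonal, Fin.prod_univ_three]
  have hW : diagonal (dv μ) * diagonal v * diagonal (dv μ) = diagonal v := by
    have hfun : (fun i => dv μ i * v i * dv μ i) = v := by
      funext i
      rcases dv_pm μ hmul hdiag i with h | h <;> rw [h] <;> ring
    rw [diagonal_mul_diagonal, diagonal_mul_diagonal, hfun]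
  rw [hdet, hW]
  apply bd_ext
  · rfl
  · intro j; exact diagonal_apply_ne _ (Fin.succ_ne_zero j).symm
  · intro i; exact diagonal_apply_ne _ (Fin.succ_ne_zero i)
  · intro a b
    by_cases hab : a = b
    · subst hab; rw [diagonal_apply_eq, diagonal_apply_eq, vet]
    · rw [diagonal_apply_ne _ hab, diagonal_apply_ne _ (fun h => hab (Fin.succ_injective _ h))]

lemma P_offdiag (A : M3) (h : ∀ a b : Fin 3, a ≠ b → A a b = 0) : μ A = FF μ A := by
  rw [show A = diagonal (fun k => A k k) by
    ext a b
    by_cases hab : a = b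
    · subst hab; rw [diagonal_apply_eq]
    · rw [diagonal_apply_ne _ hab]; exact h a b hab]
  exact P_diag μ hmul hdiag _

lemma corner_claim : ∀ n : ℕ, ∀ A : M3, A 1 0 = 0 → A 2 0 = 0 → A 0 1 = 0 → A 0 2 = 0 →
    A 1 1 ≠ 0 → (A 1 1).natAbs ≤ n → μ A = FF μ A := by
  intro n
  induction n with
  | zero => intro A _ _ _ _ h5 h6; exact absurd (Int.natAbs_eq_zero.mp (Nat.le_zero.mp h6)) h5
  | succ n ih =>
    intro A h10 h20 h01 h02 h11 hle
    by_cases hd21 : A 1 1 ∣ A 2 1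
    · by_cases hd12 : A 1 1 ∣ A 1 2
      · have e12 := Int.ediv_mul_cancel hd12
        have e21 := Int.ediv_mul_cancel hd21
        apply P_mul_right μ hmul hdiag 1 2 (by decide) (-(A 1 2 / A 1 1))
        apply P_mul_left μ hmul hdiag 2 1 (by decide) (-(A 2 1 / A 1 1))
        apply P_offdiag μ hmul hdiag
        intro a b hab
        fin_cases a <;> fin_cases b <;>
          first
            | (exact absurd rfl hab)
            | (simp [h10, h20, h01, h02]; try linarith [e12, e21])
      · have hrne : A 1 2 % A 1 1 ≠ 0 := fun hc => hd12 (Int.dvd_of_emod_eq_zero hc)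
        have hrlt := natAbs_emod_lt (A 1 2) (A 1 1) h11
        have hqe : A 1 1 * (A 1 2 / A 1 1) = A 1 2 - A 1 2 % A 1 1 := by
          rw [Int.emod_def]; ring
        apply P_mul_right μ hmul hdiag 1 2 (by decide) (-(A 1 2 / A 1 1))
        apply P_mul_right μ hmul hdiag 1 2 (by decide) 1
        apply P_mul_right μ hmul hdiag 2 1 (by decide) (-1)
        apply P_mul_right μ hmul hdiag 1 2 (by decide) 1
        apply ih
        · rw [colswap_other 1 2 (by decide) 0 (by decide) (by decide)]
          simp [h10]
        · rw [colswap_other 1 2 (by decide) 0 (by decide) (by decide)]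
          simp [h20]
        · rw [colswap_p 1 2 (by decide)]
          simp [h01, h02]
        · rw [colswap_q 1 2 (by decide)]
          simp [h01]
        · rw [colswap_p 1 2 (by decide)]
          simp only [mul_transvection_apply_same, mul_transvection_apply_of_ne,
            ne_eq, not_false_eq_true, neg_ne_zero]
          intro hc
          apply hrne
          linarith [hqe, hc]
        · rw [colswap_p 1 2 (by decide)]
          have : ((A * transvection 1 2 (-(A 1 2 / A 1 1)) : M3)) 1 2 = A 1 2 % A 1 1 := by
            simp [mul_transvection_apply_same]
            linarith [hqe]
          rw [this, Int.natAbs_neg]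
          omega
    · have hrne : A 2 1 % A 1 1 ≠ 0 := fun hc => hd21 (Int.dvd_of_emod_eq_zero hc)
      have hrlt := natAbs_emod_lt (A 2 1) (A 1 1) h11
      have hqe : A 1 1 * (A 2 1 / A 1 1) = A 2 1 - A 2 1 % A 1 1 := by
        rw [Int.emod_def]; ring
      apply P_mul_left μ hmul hdiag 2 1 (by decide) (-(A 2 1 / A 1 1))
      apply P_mul_left μ hmul hdiag 1 2 (by decide) 1
      apply P_mul_left μ hmul hdiag 2 1 (by decide) (-1)
      apply P_mul_left μ hmul hdiag 1 2 (by decide) 1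
      apply ih
      · rw [rowswap_p 1 2 (by decide)]
        simp [h10, h20]
      · rw [rowswap_q 1 2 (by decide)]
        simp [h10]
      · rw [rowswap_other 1 2 (by decide) 0 (by decide) (by decide)]
        simp [h01]
      · rw [rowswap_other 1 2 (by decide) 0 (by decide) (by decide)]
        simp [h02]
      · rw [rowswap_p 1 2 (by decide)]
        simp only [transvection_mul_apply_same, transvection_mul_apply_of_ne,
          ne_eq, not_false_eq_true]
        intro hc
        apply hrne
        linarith [hqe, hc]
      · rw [rowswap_p 1 2 (by decide)]
        have : ((transvection 2 1 (-(A 2 1 / A 1 1)) * A : M3)) 2 1 = A 2 1 % A 1 1 := by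
          simp [transvection_mul_apply_same]
          linarith [hqe]
        rw [this]
        omega

lemma P_corner (A : M3) (h10 : A 1 0 = 0) (h20 : A 2 0 = 0) (h01 : A 0 1 = 0)
    (h02 : A 0 2 = 0) : μ A = FF μ A := by
  by_cases h11 : A 1 1 = 0
  · by_cases h21 : A 2 1 = 0
    · by_cases h12 : A 1 2 = 0
      · apply P_offdiag μ hmul hdiag
        intro a b hab
        fin_cases a <;> fin_cases b <;> first | (exact absurd rfl hab) | assumption
      · apply P_mul_right μ hmul hdiag 1 2 (by decide) 1
        apply P_mul_right μ hmul hdiag 2 1 (by decide) (-1)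
        apply P_mul_right μ hmul hdiag 1 2 (by decide) 1
        apply corner_claim μ hmul hdiag
          ((((A * transvection 1 2 1 * transvection 2 1 (-1) * transvection 1 2 1 : M3)) 1 1).natAbs)
        · rw [colswap_other 1 2 (by decide) 0 (by decide) (by decide)]; exact h10
        · rw [colswap_other 1 2 (by decide) 0 (by decide) (by decide)]; exact h20
        · rw [colswap_p 1 2 (by decide)]; simp [h02]
        · rw [colswap_q 1 2 (by decide)]; exact h01
        · rw [colswap_p 1 2 (by decide)]; simpa using h12
        · exact le_rfl
    · apply P_mul_left μ hmul hdiag 1 2 (by decide) 1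
      apply P_mul_left μ hmul hdiag 2 1 (by decide) (-1)
      apply P_mul_left μ hmul hdiag 1 2 (by decide) 1
      apply corner_claim μ hmul hdiag
        ((((transvection 1 2 1 * (transvection 2 1 (-1) * (transvection 1 2 1 * A)) : M3)) 1 1).natAbs)
      · rw [rowswap_p 1 2 (by decide)]; exact h20
      · rw [rowswap_q 1 2 (by decide)]; simp [h10]
      · rw [rowswap_other 1 2 (by decide) 0 (by decide) (by decide)]; exact h01
      · rw [rowswap_other 1 2 (by decide) 0 (by decide) (by decide)]; exact h02
      · rw [rowswap_p 1 2 (by decide)]; exact h21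
      · exact le_rfl
  · exact corner_claim μ hmul hdiag ((A 1 1).natAbs) A h10 h20 h01 h02 h11 le_rfl

lemma full_claim : ∀ n : ℕ, ∀ A : M3, A 0 0 ≠ 0 → (A 0 0).natAbs ≤ n → μ A = FF μ A := by
  intro n
  induction n with
  | zero => intro A h5 h6; exact absurd (Int.natAbs_eq_zero.mp (Nat.le_zero.mp h6)) h5
  | succ n ih =>
    intro A h00 hle
    by_cases hd10 : A 0 0 ∣ A 1 0
    · by_cases hd20 : A 0 0 ∣ A 2 0
      · by_cases hd01 : A 0 0 ∣ A 0 1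
        · by_cases hd02 : A 0 0 ∣ A 0 2
          · have e10 := Int.ediv_mul_cancel hd10
            have e20 := Int.ediv_mul_cancel hd20
            have e01 := Int.ediv_mul_cancel hd01
            have e02 := Int.ediv_mul_cancel hd02
            apply P_mul_left μ hmul hdiag 1 0 (by decide) (-(A 1 0 / A 0 0))
            apply P_mul_left μ hmul hdiag 2 0 (by decide) (-(A 2 0 / A 0 0))
            apply P_mul_right μ hmul hdiag 0 1 (by decide) (-(A 0 1 / A 0 0))
            apply P_mul_right μ hmul hdiag 0 2 (by decide) (-(A 0 2 / A 0 0))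
            apply P_corner μ hmul hdiag
            · simp; try linarith [e10]
            · simp; try linarith [e20]
            · simp; try linarith [e01]
            · simp; try linarith [e02]
          · have hrne : A 0 2 % A 0 0 ≠ 0 := fun hc => hd02 (Int.dvd_of_emod_eq_zero hc)
            have hrlt := natAbs_emod_lt (A 0 2) (A 0 0) h00
            have hqe : A 0 0 * (A 0 2 / A 0 0) = A 0 2 - A 0 2 % A 0 0 := by
              rw [Int.emod_def]; ring
            apply P_mul_right μ hmul hdiag 0 2 (by decide) (-(A 0 2 / A 0 0))
            apply P_mul_right μ hmul hdiag 0 2 (by decide) 1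
            apply P_mul_right μ hmul hdiag 2 0 (by decide) (-1)
            apply P_mul_right μ hmul hdiag 0 2 (by decide) 1
            apply ih
            · rw [colswap_p 0 2 (by decide)]
              simp only [mul_transvection_apply_same, mul_transvection_apply_of_ne,
                ne_eq, not_false_eq_true, neg_ne_zero]
              intro hc
              apply hrne
              linarith [hqe, hc]
            · rw [colswap_p 0 2 (by decide)]
              have : ((A * transvection 0 2 (-(A 0 2 / A 0 0)) : M3)) 0 2 = A 0 2 % A 0 0 := by
                simp [mul_transvection_apply_same]
                linarith [hqe]
              rw [this, Int.natAbs_neg]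
              omega
        · have hrne : A 0 1 % A 0 0 ≠ 0 := fun hc => hd01 (Int.dvd_of_emod_eq_zero hc)
          have hrlt := natAbs_emod_lt (A 0 1) (A 0 0) h00
          have hqe : A 0 0 * (A 0 1 / A 0 0) = A 0 1 - A 0 1 % A 0 0 := by
            rw [Int.emod_def]; ring
          apply P_mul_right μ hmul hdiag 0 1 (by decide) (-(A 0 1 / A 0 0))
          apply P_mul_right μ hmul hdiag 0 1 (by decide) 1
          apply P_mul_right μ hmul hdiag 1 0 (by decide) (-1)
          apply P_mul_right μ hmul hdiag 0 1 (by decide) 1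
          apply ih
          · rw [colswap_p 0 1 (by decide)]
            simp only [mul_transvection_apply_same, mul_transvection_apply_of_ne,
              ne_eq, not_false_eq_true, neg_ne_zero]
            intro hc
            apply hrne
            linarith [hqe, hc]
          · rw [colswap_p 0 1 (by decide)]
            have : ((A * transvection 0 1 (-(A 0 1 / A 0 0)) : M3)) 0 1 = A 0 1 % A 0 0 := by
              simp [mul_transvection_apply_same]
              linarith [hqe]
            rw [this, Int.natAbs_neg]
            omega
      · have hrne : A 2 0 % A 0 0 ≠ 0 := fun hc => hd20 (Int.dvd_of_emod_eq_zero hc)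
        have hrlt := natAbs_emod_lt (A 2 0) (A 0 0) h00
        have hqe : A 0 0 * (A 2 0 / A 0 0) = A 2 0 - A 2 0 % A 0 0 := by
          rw [Int.emod_def]; ring
        apply P_mul_left μ hmul hdiag 2 0 (by decide) (-(A 2 0 / A 0 0))
        apply P_mul_left μ hmul hdiag 0 2 (by decide) 1
        apply P_mul_left μ hmul hdiag 2 0 (by decide) (-1)
        apply P_mul_left μ hmul hdiag 0 2 (by decide) 1
        apply ih
        · rw [rowswap_p 0 2 (by decide)]
          simp only [transvection_mul_apply_same, transvection_mul_apply_of_ne,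
            ne_eq, not_false_eq_true]
          intro hc
          apply hrne
          linarith [hqe, hc]
        · rw [rowswap_p 0 2 (by decide)]
          have : ((transvection 2 0 (-(A 2 0 / A 0 0)) * A : M3)) 2 0 = A 2 0 % A 0 0 := by
            simp [transvection_mul_apply_same]
            linarith [hqe]
          rw [this]
          omega
    · have hrne : A 1 0 % A 0 0 ≠ 0 := fun hc => hd10 (Int.dvd_of_emod_eq_zero hc)
      have hrlt := natAbs_emod_lt (A 1 0) (A 0 0) h00
      have hqe : A 0 0 * (A 1 0 / A 0 0) = A 1 0 - A 1 0 % A 0 0 := by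
        rw [Int.emod_def]; ring
      apply P_mul_left μ hmul hdiag 1 0 (by decide) (-(A 1 0 / A 0 0))
      apply P_mul_left μ hmul hdiag 0 1 (by decide) 1
      apply P_mul_left μ hmul hdiag 1 0 (by decide) (-1)
      apply P_mul_left μ hmul hdiag 0 1 (by decide) 1
      apply ih
      · rw [rowswap_p 0 1 (by decide)]
        simp only [transvection_mul_apply_same, transvection_mul_apply_of_ne,
          ne_eq, not_false_eq_true]
        intro hc
        apply hrne
        linarith [hqe, hc]
      · rw [rowswap_p 0 1 (by decide)]
        have : ((transvection 1 0 (-(A 1 0 / A 0 0)) * A : M3)) 1 0 = A 1 0 % A 0 0 := by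
          simp [transvection_mul_apply_same]
          linarith [hqe]
        rw [this]
        omega

lemma full_ne (A : M3) (h : A 0 0 ≠ 0) : μ A = FF μ A :=
  full_claim μ hmul hdiag (A 0 0).natAbs A h le_rfl

lemma P_all (A : M3) : μ A = FF μ A := by
  by_cases h00 : A 0 0 = 0
  · by_cases h10 : A 1 0 = 0
    · by_cases h20 : A 2 0 = 0
      · by_cases h01 : A 0 1 = 0
        · by_cases h02 : A 0 2 = 0
          · exact P_corner μ hmul hdiag A h10 h20 h01 h02
          · apply P_mul_right μ hmul hdiag 0 2 (by decide) 1
            apply P_mul_right μ hmul hdiag 2 0 (by decide) (-1)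
            apply P_mul_right μ hmul hdiag 0 2 (by decide) 1
            apply full_ne μ hmul hdiag
            rw [colswap_p 0 2 (by decide)]
            simpa using h02
        · apply P_mul_right μ hmul hdiag 0 1 (by decide) 1
          apply P_mul_right μ hmul hdiag 1 0 (by decide) (-1)
          apply P_mul_right μ hmul hdiag 0 1 (by decide) 1
          apply full_ne μ hmul hdiag
          rw [colswap_p 0 1 (by decide)]
          simpa using h01
      · apply P_mul_left μ hmul hdiag 0 2 (by decide) 1
        apply P_mul_left μ hmul hdiag 2 0 (by decide) (-1)
        apply P_mul_left μ hmul hdiag 0 2 (by decide) 1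
        apply full_ne μ hmul hdiag
        rw [rowswap_p 0 2 (by decide)]
        exact h20
    · apply P_mul_left μ hmul hdiag 0 1 (by decide) 1
      apply P_mul_left μ hmul hdiag 1 0 (by decide) (-1)
      apply P_mul_left μ hmul hdiag 0 1 (by decide) 1
      apply full_ne μ hmul hdiag
      rw [rowswap_p 0 1 (by decide)]
      exact h10
  · exact full_ne μ hmul hdiag A h00

end Mu3
end Stmt16Aux

theorem stmt16 (μ : Matrix (Fin 3) (Fin 3) ℤ → Matrix (Fin 4) (Fin 4) ℤ)
    (hmul : ∀ A B : Matrix (Fin 3) (Fin 3) ℤ, μ (A * B) = μ A * μ B)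
    (hdiag : ∀ a b c : ℤ,
      μ (Matrix.diagonal ![a, b, c]) = Matrix.diagonal ![a * b * c, a, b, c]) :
    ∃ d : Fin 3 → ℤ, (∀ i, d i = 1 ∨ d i = -1) ∧
      ∀ A : Matrix (Fin 3) (Fin 3) ℤ,
        μ A = blockDiag1 A.det (Matrix.diagonal d * A * Matrix.diagonal d) := by
  exact ⟨Stmt16Aux.dv μ, Stmt16Aux.dv_pm μ hmul hdiag,
    fun A => Stmt16Aux.P_all μ hmul hdiag A⟩
end

section
/- Let H be a compact metrizable abelian topological group, α₀ : H → H a continuous surjective group homomorphism, and h₀ ∈ H. Define the affine map α : H → H by α(h) = h₀ + α₀(h). Then α is exact if and only if α₀ is exact. -/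
theorem stmt18 {H : Type*} [AddCommGroup H] [TopologicalSpace H] [IsTopologicalAddGroup H]
    [CompactSpace H] [TopologicalSpace.MetrizableSpace H]
    (α₀ : H →+ H) (hc : Continuous α₀) (hs : Function.Surjective α₀) (h₀ : H) :
    ExactMap (fun h : H => h₀ + α₀ h) ↔ ExactMap (α₀ : H → H) := by
  have key : ∀ (N : ℕ) (V : Set H),
      (fun h : H => h₀ + α₀ h)^[N] '' V = Set.univ ↔ (α₀ : H → H)^[N] '' V = Set.univ := by
    intro N V
    obtain ⟨c, hcn⟩ : ∃ c : H, ∀ x, (fun h : H => h₀ + α₀ h)^[N] x = c + (α₀ : H → H)^[N] x := by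
      induction N with
      | zero => exact ⟨0, fun x => (zero_add x).symm⟩
      | succ n ih =>
        obtain ⟨c, hcn⟩ := ih
        refine ⟨h₀ + α₀ c, fun x => ?_⟩
        rw [Function.iterate_succ_apply', Function.iterate_succ_apply', hcn]
        simp [map_add, add_assoc]
    have himg : (fun h : H => h₀ + α₀ h)^[N] '' V = (c + ·) '' ((α₀ : H → H)^[N] '' V) := by
      rw [Set.image_image]
      exact Set.image_congr fun x _ => hcn x
    rw [himg]
    constructor
    · intro h
      ext x
      simp only [Set.mem_univ, iff_true]
      have : c + x ∈ (c + ·) '' ((α₀ : H → H)^[N] '' V) := by rw [h]; trivial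
      obtain ⟨y, hy, hyx⟩ := this
      simp only [] at hyx
      rwa [add_left_cancel (a := c) hyx] at hy
    · intro h
      rw [h]
      ext x
      simp only [Set.mem_univ, iff_true, Set.image_univ]
      exact ⟨-c + x, by simp⟩
  constructor
  · intro hE V hV hne
    obtain ⟨N, hN⟩ := hE V hV hne
    exact ⟨N, (key N V).mp hN⟩
  · intro hE V hV hne
    obtain ⟨N, hN⟩ := hE V hV hne
    exact ⟨N, (key N V).mpr hN⟩
end
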